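/- arXiv:1304.4359 — 5 statements merged into one kernel-verified Lean document; each statement's English description precedes it below -/
import Mathlib

section
/- Let n ≥ 1, let G : ℝⁿ → (n×n real symmetric matrices) be smooth with smooth inverse K = G⁻¹, let V, τ, h : ℝⁿ → ℝ and ξ : ℝⁿ → ℝⁿ be smooth, and suppose £_ξ G = τ·G and £_ξ V = (τ − 2h)·V. Define the gradient vector field W^α(q) = Σ_μ K^{αμ}(q) ∂V/∂q^μ. Then the Lie derivative of W along ξ, (£_ξW)^α = Σ_ρ (ξ^ρ ∂W^α/∂q^ρ − W^ρ ∂ξ^α/∂q^ρ), satisfies (£_ξW)^α = V·Σ_μ K^{αμ} ∂τ/∂q^μ − 2V·Σ_μ K^{αμ} ∂h/∂q^μ − 2h·W^α. -/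
open scoped BigOperators

/-- Partial derivative `∂f/∂q^α` of a scalar function on `ℝⁿ`. -/
noncomputable def pd {n : ℕ} (f : (Fin n → ℝ) → ℝ) (α : Fin n) (q : Fin n → ℝ) : ℝ :=
  fderiv ℝ f q (Pi.single α 1)

/-- Lie derivative `(£_ξ G)_{μν}`. -/
noncomputable def lieG {n : ℕ} (ξ : (Fin n → ℝ) → Fin n → ℝ)
    (G : (Fin n → ℝ) → Fin n → Fin n → ℝ) (q : Fin n → ℝ) (μ ν : Fin n) : ℝ :=
  ∑ α : Fin n, (ξ q α * pd (fun p => G p μ ν) α q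
      + pd (fun p => ξ p α) μ q * G q α ν
      + pd (fun p => ξ p α) ν q * G q μ α)

/-- Lie derivative `£_ξ V`. -/
noncomputable def lieV {n : ℕ} (ξ : (Fin n → ℝ) → Fin n → ℝ)
    (V : (Fin n → ℝ) → ℝ) (q : Fin n → ℝ) : ℝ :=
  ∑ α : Fin n, ξ q α * pd V α q

/-- Lie derivative of a vector field `W` along `ξ`:
`(£_ξ W)^α = Σ_ρ (ξ^ρ ∂W^α/∂q^ρ − W^ρ ∂ξ^α/∂q^ρ)`. -/
noncomputable def lieW {n : ℕ} (ξ W : (Fin n → ℝ) → Fin n → ℝ)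
    (q : Fin n → ℝ) (α : Fin n) : ℝ :=
  ∑ ρ : Fin n, (ξ q ρ * pd (fun p => W p α) ρ q - W q ρ * pd (fun p => ξ p α) ρ q)

/-- The gradient vector field `W^α = Σ_μ K^{αμ} ∂V/∂q^μ`. -/
noncomputable def gradV {n : ℕ} (K : (Fin n → ℝ) → Fin n → Fin n → ℝ)
    (V : (Fin n → ℝ) → ℝ) (q : Fin n → ℝ) (α : Fin n) : ℝ :=
  ∑ μ : Fin n, K q α μ * pd V μ q

lemma pd_smooth {n : ℕ} {f : (Fin n → ℝ) → ℝ} (hf : ContDiff ℝ (⊤:ℕ∞) f) (α : Fin n) :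
    ContDiff ℝ (⊤:ℕ∞) (fun q => pd f α q) := by
  have h1 : ContDiff ℝ (⊤:ℕ∞) (fderiv ℝ f) := hf.fderiv_right (le_refl _)
  exact h1.clm_apply contDiff_const

lemma pd_diff {n : ℕ} {f : (Fin n → ℝ) → ℝ} (hf : ContDiff ℝ (⊤:ℕ∞) f) (α : Fin n) (q) :
    DifferentiableAt ℝ (fun p => pd f α p) q :=
  ((pd_smooth hf α).differentiable (by simp)) q

lemma pd_mul {n : ℕ} {f g : (Fin n → ℝ) → ℝ} {q : Fin n → ℝ} (α : Fin n)
    (hf : DifferentiableAt ℝ f q) (hg : DifferentiableAt ℝ g q) :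
    pd (fun p => f p * g p) α q = pd f α q * g q + f q * pd g α q := by
  unfold pd
  rw [fderiv_fun_mul hf hg]
  simp; ring

lemma pd_sum {n : ℕ} {ι : Type*} (s : Finset ι) (f : ι → (Fin n → ℝ) → ℝ) {q : Fin n → ℝ} (α : Fin n)
    (hf : ∀ i ∈ s, DifferentiableAt ℝ (f i) q) :
    pd (fun p => ∑ i ∈ s, f i p) α q = ∑ i ∈ s, pd (f i) α q := by
  unfold pd
  rw [fderiv_fun_sum hf]
  simp

lemma pd_const {n : ℕ} (c : ℝ) (α : Fin n) (q : Fin n → ℝ) :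
    pd (fun _ => c) α q = 0 := by
  unfold pd; simp

lemma pd_comm {n : ℕ} {f : (Fin n → ℝ) → ℝ} (hf : ContDiff ℝ (⊤:ℕ∞) f) (μ ρ : Fin n) (q : Fin n → ℝ) :
    pd (fun p => pd f μ p) ρ q = pd (fun p => pd f ρ p) μ q := by
  have hdf : ContDiff ℝ (⊤:ℕ∞) (fderiv ℝ f) := hf.fderiv_right (le_refl _)
  have hder : ∀ y, HasFDerivAt f (fderiv ℝ f y) y := fun y =>
    ((hf.differentiable (by simp)) y).hasFDerivAt
  have h2 : HasFDerivAt (fderiv ℝ f) (fderiv ℝ (fderiv ℝ f) q) q :=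
    ((hdf.differentiable (by simp)) q).hasFDerivAt
  have hsymm := second_derivative_symmetric hder h2
  have key : ∀ (a b : Fin n), pd (fun p => pd f a p) b q
      = fderiv ℝ (fderiv ℝ f) q (Pi.single b 1) (Pi.single a 1) := by
    intro a b
    have h3 : (fun p => pd f a p) = fun p => (fderiv ℝ f p) (Pi.single a 1) := rfl
    rw [h3]
    unfold pd
    rw [fderiv_clm_apply ((hdf.differentiable (by simp)) q) (differentiableAt_const _)]
    simp
  rw [key, key, hsymm]

section
variable {n : ℕ} {G K : (Fin n → ℝ) → Fin n → Fin n → ℝ}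

lemma GK_inv (hGsymm : ∀ q μ ν, G q μ ν = G q ν μ) (hKsymm : ∀ q μ ν, K q μ ν = K q ν μ)
    (hinv : ∀ q μ ν, (∑ ρ : Fin n, K q μ ρ * G q ρ ν) = if μ = ν then (1 : ℝ) else 0)
    (q : Fin n → ℝ) (ρ β : Fin n) :
    ∑ ν : Fin n, G q ρ ν * K q ν β = if ρ = β then (1:ℝ) else 0 := by
  calc ∑ ν : Fin n, G q ρ ν * K q ν β = ∑ ν : Fin n, K q β ν * G q ν ρ := by
        apply Finset.sum_congr rfl; intro ν _; rw [hGsymm, hKsymm]; ring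
    _ = if β = ρ then 1 else 0 := hinv q β ρ
    _ = if ρ = β then 1 else 0 := by by_cases hc : ρ = β <;> simp [hc]; intro hc2; exact hc hc2.symm

lemma dinv (hGsmooth : ∀ μ ν, ContDiff ℝ (⊤ : ℕ∞) fun q => G q μ ν)
    (hKsmooth : ∀ μ ν, ContDiff ℝ (⊤ : ℕ∞) fun q => K q μ ν)
    (hinv : ∀ q μ ν, (∑ ρ : Fin n, K q μ ρ * G q ρ ν) = if μ = ν then (1 : ℝ) else 0)
    (q : Fin n → ℝ) (μ ν σ : Fin n) :
    ∑ ρ : Fin n, (pd (fun p => K p μ ρ) σ q * G q ρ ν + K q μ ρ * pd (fun p => G p ρ ν) σ q) = 0 := by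
  have hdK : ∀ a b, DifferentiableAt ℝ (fun p => K p a b) q :=
    fun a b => ((hKsmooth a b).differentiable (by simp)) q
  have hdG : ∀ a b, DifferentiableAt ℝ (fun p => G p a b) q :=
    fun a b => ((hGsmooth a b).differentiable (by simp)) q
  have h1 : pd (fun p => ∑ ρ : Fin n, K p μ ρ * G p ρ ν) σ q = 0 := by
    have h0 : (fun p => ∑ ρ : Fin n, K p μ ρ * G p ρ ν) = fun _ => (if μ = ν then (1:ℝ) else 0) :=
      funext fun p => hinv p μ ν
    rw [h0, pd_const]
  rw [pd_sum Finset.univ (fun ρ p => K p μ ρ * G p ρ ν) σ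
      (fun ρ _ => (hdK μ ρ).mul (hdG ρ ν))] at h1
  rw [← h1]
  apply Finset.sum_congr rfl
  intro ρ _
  rw [pd_mul σ (hdK μ ρ) (hdG ρ ν)]

lemma lieK_eq (hGsmooth : ∀ μ ν, ContDiff ℝ (⊤ : ℕ∞) fun q => G q μ ν)
    (hKsmooth : ∀ μ ν, ContDiff ℝ (⊤ : ℕ∞) fun q => K q μ ν)
    (hGsymm : ∀ q μ ν, G q μ ν = G q ν μ) (hKsymm : ∀ q μ ν, K q μ ν = K q ν μ)
    (hinv : ∀ q μ ν, (∑ ρ : Fin n, K q μ ρ * G q ρ ν) = if μ = ν then (1 : ℝ) else 0)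
    (τ : (Fin n → ℝ) → ℝ) (ξ : (Fin n → ℝ) → Fin n → ℝ)
    (hlieG : ∀ q μ ν, lieG ξ G q μ ν = τ q * G q μ ν)
    (q : Fin n → ℝ) (α β : Fin n) :
    ∑ σ : Fin n, ξ q σ * pd (fun p => K p α β) σ q
      = - (τ q * K q α β) + (∑ ρ : Fin n, K q α ρ * pd (fun p => ξ p β) ρ q)
        + (∑ ρ : Fin n, K q ρ β * pd (fun p => ξ p α) ρ q) := by
  -- abbreviations
  set dK : Fin n → Fin n → Fin n → ℝ := fun σ a b => pd (fun p => K p a b) σ q with hdKdef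
  set dG : Fin n → Fin n → Fin n → ℝ := fun σ a b => pd (fun p => G p a b) σ q with hdGdef
  set dξ : Fin n → Fin n → ℝ := fun a b => pd (fun p => ξ p b) a q with hdξdef
  -- step 2: ∑ρ dK σ α ρ * G ρ ν = -∑ρ K α ρ * dG σ ρ ν
  have hstep2 : ∀ σ ν, ∑ ρ : Fin n, dK σ α ρ * G q ρ ν = - ∑ ρ : Fin n, K q α ρ * dG σ ρ ν := by
    intro σ ν
    have := dinv hGsmooth hKsmooth hinv q α ν σ
    rw [Finset.sum_add_distrib] at this
    linarith
  -- step 1: dK σ α β = ∑ν (∑ρ dK σ α ρ * G ρ ν) * K ν β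
  have hstep1 : ∀ σ, dK σ α β = ∑ ν : Fin n, (∑ ρ : Fin n, dK σ α ρ * G q ρ ν) * K q ν β := by
    intro σ
    calc dK σ α β = ∑ ρ : Fin n, dK σ α ρ * (if ρ = β then (1:ℝ) else 0) := by simp
      _ = ∑ ρ : Fin n, dK σ α ρ * ∑ ν : Fin n, G q ρ ν * K q ν β := by
            apply Finset.sum_congr rfl; intro ρ _; rw [GK_inv hGsymm hKsymm hinv]
      _ = ∑ ρ : Fin n, ∑ ν : Fin n, dK σ α ρ * G q ρ ν * K q ν β := by
            apply Finset.sum_congr rfl; intro ρ _; rw [Finset.mul_sum]; apply Finset.sum_congr rfl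
            intro ν _; ring
      _ = ∑ ν : Fin n, ∑ ρ : Fin n, dK σ α ρ * G q ρ ν * K q ν β := Finset.sum_comm
      _ = ∑ ν : Fin n, (∑ ρ : Fin n, dK σ α ρ * G q ρ ν) * K q ν β := by
            apply Finset.sum_congr rfl; intro ν _; rw [Finset.sum_mul]
  -- combine: dK σ α β = -∑ν ∑ρ K α ρ * dG σ ρ ν * K ν β
  have hKdG : ∀ σ, dK σ α β = - ∑ ν : Fin n, ∑ ρ : Fin n, K q α ρ * dG σ ρ ν * K q ν β := by
    intro σ
    rw [hstep1 σ]
    rw [← Finset.sum_neg_distrib]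
    apply Finset.sum_congr rfl; intro ν _
    rw [hstep2 σ ν, neg_mul, Finset.sum_mul]
  -- extract from hlieG
  have hxi_dG : ∀ ρ ν, ∑ σ : Fin n, ξ q σ * dG σ ρ ν
      = τ q * G q ρ ν - (∑ σ : Fin n, dξ ρ σ * G q σ ν) - (∑ σ : Fin n, dξ ν σ * G q ρ σ) := by
    intro ρ ν
    have h := hlieG q ρ ν
    unfold lieG at h
    rw [Finset.sum_add_distrib, Finset.sum_add_distrib] at h
    have : (∑ σ : Fin n, ξ q σ * dG σ ρ ν) + (∑ σ : Fin n, dξ ρ σ * G q σ ν)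
        + (∑ σ : Fin n, dξ ν σ * G q ρ σ) = τ q * G q ρ ν := h
    linarith
  have hA : ∑ σ : Fin n, ξ q σ * ∑ ν : Fin n, ∑ ρ : Fin n, K q α ρ * dG σ ρ ν * K q ν β
      = ∑ ν : Fin n, ∑ ρ : Fin n, K q α ρ * (∑ σ : Fin n, ξ q σ * dG σ ρ ν) * K q ν β := by
    simp only [Finset.mul_sum, Finset.sum_mul]
    rw [Finset.sum_comm]
    apply Finset.sum_congr rfl; intro ν _
    rw [Finset.sum_comm]
    apply Finset.sum_congr rfl; intro ρ _
    apply Finset.sum_congr rfl; intro σ _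
    ring
  have hT1 : ∑ ν : Fin n, ∑ ρ : Fin n, K q α ρ * (τ q * G q ρ ν) * K q ν β = τ q * K q α β := by
    calc ∑ ν : Fin n, ∑ ρ : Fin n, K q α ρ * (τ q * G q ρ ν) * K q ν β
        = ∑ ν : Fin n, τ q * ((∑ ρ : Fin n, K q α ρ * G q ρ ν) * K q ν β) := by
          apply Finset.sum_congr rfl; intro ν _
          rw [Finset.sum_mul, Finset.mul_sum]
          apply Finset.sum_congr rfl; intro ρ _; ring
      _ = ∑ ν : Fin n, τ q * ((if α = ν then (1:ℝ) else 0) * K q ν β) := by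
          apply Finset.sum_congr rfl; intro ν _; rw [hinv]
      _ = τ q * K q α β := by simp
  have hT2 : ∑ ν : Fin n, ∑ ρ : Fin n, K q α ρ * (∑ σ : Fin n, dξ ρ σ * G q σ ν) * K q ν β
      = ∑ ρ : Fin n, K q α ρ * dξ ρ β := by
    calc ∑ ν : Fin n, ∑ ρ : Fin n, K q α ρ * (∑ σ : Fin n, dξ ρ σ * G q σ ν) * K q ν β
        = ∑ ρ : Fin n, ∑ σ : Fin n, K q α ρ * dξ ρ σ * ∑ ν : Fin n, G q σ ν * K q ν β := by
          rw [Finset.sum_comm]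
          apply Finset.sum_congr rfl; intro ρ _
          simp only [Finset.mul_sum, Finset.sum_mul]
          rw [Finset.sum_comm]
          apply Finset.sum_congr rfl; intro σ _
          apply Finset.sum_congr rfl; intro ν _; ring
      _ = ∑ ρ : Fin n, ∑ σ : Fin n, K q α ρ * dξ ρ σ * (if σ = β then (1:ℝ) else 0) := by
          apply Finset.sum_congr rfl; intro ρ _
          apply Finset.sum_congr rfl; intro σ _
          rw [GK_inv hGsymm hKsymm hinv]
      _ = ∑ ρ : Fin n, K q α ρ * dξ ρ β := by simp
  have hT3 : ∑ ν : Fin n, ∑ ρ : Fin n, K q α ρ * (∑ σ : Fin n, dξ ν σ * G q ρ σ) * K q ν β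
      = ∑ ρ : Fin n, K q ρ β * dξ ρ α := by
    calc ∑ ν : Fin n, ∑ ρ : Fin n, K q α ρ * (∑ σ : Fin n, dξ ν σ * G q ρ σ) * K q ν β
        = ∑ ν : Fin n, ∑ σ : Fin n, K q ν β * dξ ν σ * ∑ ρ : Fin n, K q α ρ * G q ρ σ := by
          apply Finset.sum_congr rfl; intro ν _
          simp only [Finset.mul_sum, Finset.sum_mul]
          rw [Finset.sum_comm]
          apply Finset.sum_congr rfl; intro σ _
          apply Finset.sum_congr rfl; intro ρ _; ring
      _ = ∑ ν : Fin n, ∑ σ : Fin n, K q ν β * dξ ν σ * (if α = σ then (1:ℝ) else 0) := by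
          apply Finset.sum_congr rfl; intro ν _
          apply Finset.sum_congr rfl; intro σ _
          rw [hinv]
      _ = ∑ ρ : Fin n, K q ρ β * dξ ρ α := by simp
  calc ∑ σ : Fin n, ξ q σ * dK σ α β
      = ∑ σ : Fin n, ξ q σ * (- ∑ ν : Fin n, ∑ ρ : Fin n, K q α ρ * dG σ ρ ν * K q ν β) := by
        apply Finset.sum_congr rfl; intro σ _; rw [hKdG σ]
    _ = - ∑ σ : Fin n, ξ q σ * ∑ ν : Fin n, ∑ ρ : Fin n, K q α ρ * dG σ ρ ν * K q ν β := by
        rw [← Finset.sum_neg_distrib]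
        apply Finset.sum_congr rfl; intro σ _; ring
    _ = - ∑ ν : Fin n, ∑ ρ : Fin n, K q α ρ * (∑ σ : Fin n, ξ q σ * dG σ ρ ν) * K q ν β := by rw [hA]
    _ = - ∑ ν : Fin n, ∑ ρ : Fin n, (K q α ρ * (τ q * G q ρ ν) * K q ν β
          - K q α ρ * (∑ σ : Fin n, dξ ρ σ * G q σ ν) * K q ν β
          - K q α ρ * (∑ σ : Fin n, dξ ν σ * G q ρ σ) * K q ν β) := by
        congr 1
        apply Finset.sum_congr rfl; intro ν _
        apply Finset.sum_congr rfl; intro ρ _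
        rw [hxi_dG ρ ν]; ring
    _ = - ((∑ ν : Fin n, ∑ ρ : Fin n, K q α ρ * (τ q * G q ρ ν) * K q ν β)
          - (∑ ν : Fin n, ∑ ρ : Fin n, K q α ρ * (∑ σ : Fin n, dξ ρ σ * G q σ ν) * K q ν β)
          - (∑ ν : Fin n, ∑ ρ : Fin n, K q α ρ * (∑ σ : Fin n, dξ ν σ * G q ρ σ) * K q ν β)) := by
        congr 1
        rw [← Finset.sum_sub_distrib, ← Finset.sum_sub_distrib]
        apply Finset.sum_congr rfl; intro ν _
        rw [← Finset.sum_sub_distrib, ← Finset.sum_sub_distrib]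
    _ = - (τ q * K q α β) + (∑ ρ : Fin n, K q α ρ * dξ ρ β) + (∑ ρ : Fin n, K q ρ β * dξ ρ α) := by
        rw [hT1, hT2, hT3]; ring
end


lemma pd_sub {n : ℕ} {f g : (Fin n → ℝ) → ℝ} {q : Fin n → ℝ} (α : Fin n)
    (hf : DifferentiableAt ℝ f q) (hg : DifferentiableAt ℝ g q) :
    pd (fun p => f p - g p) α q = pd f α q - pd g α q := by
  unfold pd; rw [fderiv_fun_sub hf hg]; simp

lemma pd_cmul {n : ℕ} {f : (Fin n → ℝ) → ℝ} {q : Fin n → ℝ} (c : ℝ) (α : Fin n)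
    (hf : DifferentiableAt ℝ f q) :
    pd (fun p => c * f p) α q = c * pd f α q := by
  unfold pd; rw [fderiv_const_mul hf]; simp


lemma lieV_deriv {n : ℕ} (V τ h : (Fin n → ℝ) → ℝ) (ξ : (Fin n → ℝ) → Fin n → ℝ)
    (hVsmooth : ContDiff ℝ (⊤ : ℕ∞) V) (hξsmooth : ContDiff ℝ (⊤ : ℕ∞) ξ)
    (hlieV : ∀ q, lieV ξ V q = (τ q - 2 * h q) * V q) (q : Fin n → ℝ) (μ : Fin n) :
    ∑ ρ : Fin n, ξ q ρ * pd (fun p => pd V μ p) ρ q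
      = pd (fun p => (τ p - 2 * h p) * V p) μ q
        - ∑ ρ : Fin n, pd (fun p => ξ p ρ) μ q * pd V ρ q := by
  have hξc : ∀ ρ : Fin n, ContDiff ℝ (⊤ : ℕ∞) (fun p => ξ p ρ) := fun ρ =>
    (contDiff_pi.mp hξsmooth) ρ
  have hξd : ∀ (ρ : Fin n) (p : Fin n → ℝ), DifferentiableAt ℝ (fun p => ξ p ρ) p := fun ρ p =>
    ((hξc ρ).differentiable (by simp)) p
  have hfun : (fun p => ∑ ρ : Fin n, ξ p ρ * pd V ρ p) = fun p => (τ p - 2 * h p) * V p :=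
    funext fun p => hlieV p
  have h1 : pd (fun p => ∑ ρ : Fin n, ξ p ρ * pd V ρ p) μ q
      = pd (fun p => (τ p - 2 * h p) * V p) μ q := by rw [hfun]
  rw [pd_sum Finset.univ (fun ρ p => ξ p ρ * pd V ρ p) μ
      (fun ρ _ => (hξd ρ q).mul (pd_diff hVsmooth ρ q))] at h1
  have h2 : ∀ ρ : Fin n, pd (fun p => ξ p ρ * pd V ρ p) μ q
      = pd (fun p => ξ p ρ) μ q * pd V ρ q + ξ q ρ * pd (fun p => pd V μ p) ρ q := by
    intro ρ
    rw [pd_mul μ (hξd ρ q) (pd_diff hVsmooth ρ q), pd_comm hVsmooth ρ μ q]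
  rw [Finset.sum_congr rfl (fun ρ _ => h2 ρ), Finset.sum_add_distrib] at h1
  linarith


/-- if `£_ξ G = τ·G` and `£_ξ V = (τ−2h)·V` then the gradient field
`W^α = K^{αμ} V_{,μ}` satisfies `(£_ξ W)^α = V K^{αμ}τ_{,μ} − 2V K^{αμ}h_{,μ} − 2h W^α`. -/

theorem lie_derivative_of_gradient_field (n : ℕ) (hn : 1 ≤ n)
    (G K : (Fin n → ℝ) → Fin n → Fin n → ℝ)
    (hGsmooth : ∀ μ ν, ContDiff ℝ (⊤ : ℕ∞) fun q => G q μ ν)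
    (hKsmooth : ∀ μ ν, ContDiff ℝ (⊤ : ℕ∞) fun q => K q μ ν)
    (hGsymm : ∀ q μ ν, G q μ ν = G q ν μ)
    (hKsymm : ∀ q μ ν, K q μ ν = K q ν μ)
    (hinv : ∀ q μ ν, (∑ ρ : Fin n, K q μ ρ * G q ρ ν) = if μ = ν then (1 : ℝ) else 0)
    (V τ h : (Fin n → ℝ) → ℝ) (ξ : (Fin n → ℝ) → Fin n → ℝ)
    (hVsmooth : ContDiff ℝ (⊤ : ℕ∞) V)
    (hτsmooth : ContDiff ℝ (⊤ : ℕ∞) τ)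
    (hhsmooth : ContDiff ℝ (⊤ : ℕ∞) h)
    (hξsmooth : ContDiff ℝ (⊤ : ℕ∞) ξ)
    (hlieG : ∀ q μ ν, lieG ξ G q μ ν = τ q * G q μ ν)
    (hlieV : ∀ q, lieV ξ V q = (τ q - 2 * h q) * V q) :
    ∀ q α, lieW ξ (gradV K V) q α
      = V q * (∑ μ : Fin n, K q α μ * pd τ μ q)
        - 2 * V q * (∑ μ : Fin n, K q α μ * pd h μ q)
        - 2 * h q * gradV K V q α := by
  intro q α
  have hKd : ∀ (a b : Fin n) (p : Fin n → ℝ), DifferentiableAt ℝ (fun p => K p a b) p :=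
    fun a b p => ((hKsmooth a b).differentiable (by simp)) p
  have hVd : ∀ (p : Fin n → ℝ), DifferentiableAt ℝ V p :=
    fun p => (hVsmooth.differentiable (by simp)) p
  have hτd : DifferentiableAt ℝ τ q := (hτsmooth.differentiable (by simp)) q
  have hhd : DifferentiableAt ℝ h q := (hhsmooth.differentiable (by simp)) q
  -- derivative of gradient field components
  have hpdW : ∀ ρ : Fin n, pd (fun p => gradV K V p α) ρ q
      = ∑ μ : Fin n, (pd (fun p => K p α μ) ρ q * pd V μ q
          + K q α μ * pd (fun p => pd V μ p) ρ q) := by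
    intro ρ
    have e : (fun p => gradV K V p α) = fun p => ∑ μ : Fin n, K p α μ * pd V μ p := rfl
    rw [e, pd_sum Finset.univ (fun μ p => K p α μ * pd V μ p) ρ
        (fun μ _ => (hKd α μ q).mul (pd_diff hVsmooth μ q))]
    exact Finset.sum_congr rfl fun μ _ => pd_mul ρ (hKd α μ q) (pd_diff hVsmooth μ q)
  -- derivative of (τ - 2h) V
  have hpdTV : ∀ μ : Fin n, pd (fun p => (τ p - 2 * h p) * V p) μ q
      = (pd τ μ q - 2 * pd h μ q) * V q + (τ q - 2 * h q) * pd V μ q := by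
    intro μ
    rw [pd_mul (f := fun p => τ p - 2 * h p) μ (hτd.sub (hhd.const_mul 2)) (hVd q),
      pd_sub μ hτd (hhd.const_mul 2), pd_cmul 2 μ hhd]
  -- cancellation identities
  have hc1 : ∑ μ : Fin n, (∑ ρ : Fin n, K q ρ μ * pd (fun p => ξ p α) ρ q) * pd V μ q
      = ∑ ρ : Fin n, (∑ μ : Fin n, K q ρ μ * pd V μ q) * pd (fun p => ξ p α) ρ q := by
    simp only [Finset.sum_mul]
    rw [Finset.sum_comm]
    exact Finset.sum_congr rfl fun ρ _ => Finset.sum_congr rfl fun μ _ => by ring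
  have hc2 : ∑ μ : Fin n, (∑ ρ : Fin n, K q α ρ * pd (fun p => ξ p μ) ρ q) * pd V μ q
      = ∑ μ : Fin n, K q α μ * ∑ ρ : Fin n, pd (fun p => ξ p ρ) μ q * pd V ρ q := by
    simp only [Finset.sum_mul, Finset.mul_sum]
    rw [Finset.sum_comm]
    exact Finset.sum_congr rfl fun μ _ => Finset.sum_congr rfl fun ρ _ => by ring
  -- final single-sum identity
  have hfin : (∑ μ : Fin n, -(τ q * (K q α μ * pd V μ q)))
      + (∑ μ : Fin n, K q α μ * ((pd τ μ q - 2 * pd h μ q) * V q))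
      + (∑ μ : Fin n, K q α μ * ((τ q - 2 * h q) * pd V μ q))
      = V q * (∑ μ : Fin n, K q α μ * pd τ μ q)
        - 2 * V q * (∑ μ : Fin n, K q α μ * pd h μ q)
        - 2 * h q * ∑ μ : Fin n, K q α μ * pd V μ q := by
    rw [Finset.mul_sum, Finset.mul_sum, Finset.mul_sum,
      ← Finset.sum_sub_distrib, ← Finset.sum_sub_distrib,
      ← Finset.sum_add_distrib, ← Finset.sum_add_distrib]
    exact Finset.sum_congr rfl fun μ _ => by ring
  have hgoal : gradV K V q α = ∑ μ : Fin n, K q α μ * pd V μ q := rfl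
  rw [hgoal]
  calc lieW ξ (gradV K V) q α
      = ∑ ρ : Fin n, (ξ q ρ * ∑ μ : Fin n, (pd (fun p => K p α μ) ρ q * pd V μ q
            + K q α μ * pd (fun p => pd V μ p) ρ q)
          - (∑ μ : Fin n, K q ρ μ * pd V μ q) * pd (fun p => ξ p α) ρ q) := by
        unfold lieW
        apply Finset.sum_congr rfl; intro ρ _
        rw [hpdW ρ]
        rfl
    _ = (∑ μ : Fin n, (∑ ρ : Fin n, ξ q ρ * pd (fun p => K p α μ) ρ q) * pd V μ q)
        + (∑ μ : Fin n, K q α μ * ∑ ρ : Fin n, ξ q ρ * pd (fun p => pd V μ p) ρ q)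
        - ∑ ρ : Fin n, (∑ μ : Fin n, K q ρ μ * pd V μ q) * pd (fun p => ξ p α) ρ q := by
        rw [Finset.sum_sub_distrib]
        congr 1
        calc ∑ ρ : Fin n, ξ q ρ * ∑ μ : Fin n, (pd (fun p => K p α μ) ρ q * pd V μ q
                + K q α μ * pd (fun p => pd V μ p) ρ q)
            = ∑ ρ : Fin n, ∑ μ : Fin n, (ξ q ρ * pd (fun p => K p α μ) ρ q * pd V μ q
                + K q α μ * (ξ q ρ * pd (fun p => pd V μ p) ρ q)) := by
              apply Finset.sum_congr rfl; intro ρ _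
              rw [Finset.mul_sum]
              exact Finset.sum_congr rfl fun μ _ => by ring
          _ = ∑ μ : Fin n, ∑ ρ : Fin n, (ξ q ρ * pd (fun p => K p α μ) ρ q * pd V μ q
                + K q α μ * (ξ q ρ * pd (fun p => pd V μ p) ρ q)) := Finset.sum_comm
          _ = (∑ μ : Fin n, (∑ ρ : Fin n, ξ q ρ * pd (fun p => K p α μ) ρ q) * pd V μ q)
              + (∑ μ : Fin n, K q α μ * ∑ ρ : Fin n, ξ q ρ * pd (fun p => pd V μ p) ρ q) := by
              rw [← Finset.sum_add_distrib]
              apply Finset.sum_congr rfl; intro μ _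
              rw [Finset.sum_add_distrib, Finset.sum_mul, Finset.mul_sum]
    _ = (∑ μ : Fin n, (-(τ q * K q α μ) + (∑ ρ : Fin n, K q α ρ * pd (fun p => ξ p μ) ρ q)
            + (∑ ρ : Fin n, K q ρ μ * pd (fun p => ξ p α) ρ q)) * pd V μ q)
        + (∑ μ : Fin n, K q α μ * ((pd τ μ q - 2 * pd h μ q) * V q + (τ q - 2 * h q) * pd V μ q
            - ∑ ρ : Fin n, pd (fun p => ξ p ρ) μ q * pd V ρ q))
        - ∑ ρ : Fin n, (∑ μ : Fin n, K q ρ μ * pd V μ q) * pd (fun p => ξ p α) ρ q := by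
        congr 1
        congr 1
        · apply Finset.sum_congr rfl; intro μ _
          rw [lieK_eq hGsmooth hKsmooth hGsymm hKsymm hinv τ ξ hlieG q α μ]
        · apply Finset.sum_congr rfl; intro μ _
          rw [lieV_deriv V τ h ξ hVsmooth hξsmooth hlieV q μ, hpdTV μ]
    _ = V q * (∑ μ : Fin n, K q α μ * pd τ μ q)
        - 2 * V q * (∑ μ : Fin n, K q α μ * pd h μ q)
        - 2 * h q * ∑ μ : Fin n, K q α μ * pd V μ q := by
        have e1 : ∑ μ : Fin n, (-(τ q * K q α μ)
              + (∑ ρ : Fin n, K q α ρ * pd (fun p => ξ p μ) ρ q)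
              + (∑ ρ : Fin n, K q ρ μ * pd (fun p => ξ p α) ρ q)) * pd V μ q
            = (∑ μ : Fin n, -(τ q * (K q α μ * pd V μ q)))
              + (∑ μ : Fin n, (∑ ρ : Fin n, K q α ρ * pd (fun p => ξ p μ) ρ q) * pd V μ q)
              + (∑ μ : Fin n, (∑ ρ : Fin n, K q ρ μ * pd (fun p => ξ p α) ρ q) * pd V μ q) := by
          rw [← Finset.sum_add_distrib, ← Finset.sum_add_distrib]
          exact Finset.sum_congr rfl fun μ _ => by ring
        have e2 : ∑ μ : Fin n, K q α μ * ((pd τ μ q - 2 * pd h μ q) * V q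
              + (τ q - 2 * h q) * pd V μ q - ∑ ρ : Fin n, pd (fun p => ξ p ρ) μ q * pd V ρ q)
            = (∑ μ : Fin n, K q α μ * ((pd τ μ q - 2 * pd h μ q) * V q))
              + (∑ μ : Fin n, K q α μ * ((τ q - 2 * h q) * pd V μ q))
              - (∑ μ : Fin n, K q α μ * ∑ ρ : Fin n, pd (fun p => ξ p ρ) μ q * pd V ρ q) := by
          rw [← Finset.sum_add_distrib, ← Finset.sum_sub_distrib]
          exact Finset.sum_congr rfl fun μ _ => by ring
        rw [e1, e2, hc1, hc2]
        linarith [hfin]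
end

section
/- Let n ≥ 2, let G : ℝⁿ → (n×n real symmetric matrices) be smooth with smooth inverse K, let V : ℝⁿ → ℝ be smooth and nowhere zero, and let ξ : ℝⁿ → ℝⁿ, τ, h : ℝⁿ → ℝ be smooth. Suppose (i) £_ξ G = τ·G, (ii) £_ξ V = (τ − 2h)·V, and (iii) for all q, μ, ν, κ: £_ξ Γ^κ_{μν} − (1/2)[(∂h/∂q^μ) δ^κ_ν + (∂h/∂q^ν) δ^κ_μ] − P^κ G_{μν} = 0, where P^κ = (£_ξW)^κ/(2V) + h·W^κ/V and W^α = Σ_μ K^{αμ} ∂V/∂q^μ. Then there exists a constant c with h(q) = τ(q) + c for all q ∈ ℝⁿ. -/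
open scoped BigOperators

/-- Christoffel symbols of `G`, with `K = G⁻¹`. -/
noncomputable def christoffel {n : ℕ} (G K : (Fin n → ℝ) → Fin n → Fin n → ℝ)
    (q : Fin n → ℝ) (κ μ ν : Fin n) : ℝ :=
  (1 / 2) * ∑ ρ : Fin n, K q κ ρ *
    (pd (fun p => G p ρ ν) μ q + pd (fun p => G p ρ μ) ν q - pd (fun p => G p μ ν) ρ q)

/-- Lie derivative of the Christoffel symbols along `ξ`. -/
noncomputable def lieGamma {n : ℕ} (ξ : (Fin n → ℝ) → Fin n → ℝ)
    (Γ : (Fin n → ℝ) → Fin n → Fin n → Fin n → ℝ) (q : Fin n → ℝ) (κ μ ν : Fin n) : ℝ :=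
  (∑ ρ : Fin n, ξ q ρ * pd (fun p => Γ p κ μ ν) ρ q)
  - (∑ ρ : Fin n, pd (fun p => ξ p κ) ρ q * Γ q ρ μ ν)
  + (∑ ρ : Fin n, pd (fun p => ξ p ρ) μ q * Γ q κ ρ ν)
  + (∑ ρ : Fin n, pd (fun p => ξ p ρ) ν q * Γ q κ μ ρ)
  + pd (fun p => pd (fun r => ξ r κ) ν p) μ q

namespace Aux
variable {n : ℕ}

lemma pd_add {f g : (Fin n → ℝ) → ℝ} {q : Fin n → ℝ} (hf : DifferentiableAt ℝ f q)
    (hg : DifferentiableAt ℝ g q) (α : Fin n) :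
    pd (fun p => f p + g p) α q = pd f α q + pd g α q := by
  simp [pd, fderiv_fun_add hf hg]

lemma pd_sub {f g : (Fin n → ℝ) → ℝ} {q : Fin n → ℝ} (hf : DifferentiableAt ℝ f q)
    (hg : DifferentiableAt ℝ g q) (α : Fin n) :
    pd (fun p => f p - g p) α q = pd f α q - pd g α q := by
  simp [pd, fderiv_fun_sub hf hg]

lemma pd_mul {f g : (Fin n → ℝ) → ℝ} {q : Fin n → ℝ} (hf : DifferentiableAt ℝ f q)
    (hg : DifferentiableAt ℝ g q) (α : Fin n) :
    pd (fun p => f p * g p) α q = pd f α q * g q + f q * pd g α q := by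
  simp [pd, fderiv_fun_mul hf hg]; ring

lemma pd_const (c : ℝ) (α : Fin n) (q : Fin n → ℝ) : pd (fun _ => c) α q = 0 := by
  simp [pd]

lemma pd_const_mul {f : (Fin n → ℝ) → ℝ} {q : Fin n → ℝ} (hf : DifferentiableAt ℝ f q)
    (c : ℝ) (α : Fin n) : pd (fun p => c * f p) α q = c * pd f α q := by
  simp [pd, fderiv_const_mul hf]

lemma pd_sum {ι : Type*} (s : Finset ι) {f : ι → (Fin n → ℝ) → ℝ} {q : Fin n → ℝ}
    (hf : ∀ i ∈ s, DifferentiableAt ℝ (f i) q) (α : Fin n) :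
    pd (fun p => ∑ i ∈ s, f i p) α q = ∑ i ∈ s, pd (f i) α q := by
  simp [pd, fderiv_fun_sum hf]

lemma ContDiff.pd' {f : (Fin n → ℝ) → ℝ} (hf : ContDiff ℝ (⊤ : ℕ∞) f) (α : Fin n) :
    ContDiff ℝ (⊤ : ℕ∞) (fun q => pd f α q) := by
  exact (hf.fderiv_right (m := (⊤ : ℕ∞)) (by exact_mod_cast le_top)).clm_apply contDiff_const

lemma pd_comm {f : (Fin n → ℝ) → ℝ} (hf : ContDiff ℝ (⊤ : ℕ∞) f) (α β : Fin n) (q : Fin n → ℝ) :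
    pd (fun p => pd f β p) α q = pd (fun p => pd f α p) β q := by
  have hd : Differentiable ℝ f := hf.differentiable (by simp)
  have h2 : DifferentiableAt ℝ (fderiv ℝ f) q :=
    ((hf.fderiv_right (m := (⊤ : ℕ∞)) (by exact_mod_cast le_top)).differentiable (by simp)) q
  have key : ∀ v w : Fin n → ℝ, fderiv ℝ (fun p => fderiv ℝ f p v) q w
      = fderiv ℝ (fderiv ℝ f) q w v := by
    intro v w
    rw [fderiv_clm_apply h2 (differentiableAt_const v)]
    simp
  show fderiv ℝ (fun p => fderiv ℝ f p _) q _ = fderiv ℝ (fun p => fderiv ℝ f p _) q _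
  rw [key, key]
  exact second_derivative_symmetric (fun y => (hd y).hasFDerivAt) h2.hasFDerivAt _ _

lemma sum_split3 {m : ℕ} (f g h : Fin m → ℝ) :
    (∑ x, (f x + (g x + h x))) = (∑ x, f x) + ((∑ x, g x) + (∑ x, h x)) := by
  rw [Finset.sum_add_distrib, Finset.sum_add_distrib]

lemma cpd {f : (Fin n → ℝ) → ℝ} (hf : ContDiff ℝ (⊤ : ℕ∞) f) (α : Fin n) :
    ContDiff ℝ (⊤ : ℕ∞) (fun q => pd f α q) :=
  (hf.fderiv_right (m := (⊤ : ℕ∞)) (by exact_mod_cast le_top)).clm_apply contDiff_const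

lemma cdiff {f : (Fin n → ℝ) → ℝ} (hf : ContDiff ℝ (⊤ : ℕ∞) f) :
    Differentiable ℝ f := hf.differentiable (by simp)

lemma sum4_comm (F : Fin n → Fin n → Fin n → Fin n → ℝ) :
    ∑ ν, ∑ a, ∑ b, ∑ ρ, F ν a b ρ = ∑ b, ∑ ρ, ∑ ν, ∑ a, F ν a b ρ := by
  calc ∑ ν, ∑ a, ∑ b, ∑ ρ, F ν a b ρ
      = ∑ ν, ∑ b, ∑ a, ∑ ρ, F ν a b ρ :=
        Finset.sum_congr rfl fun ν _ => Finset.sum_comm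
    _ = ∑ b, ∑ ν, ∑ a, ∑ ρ, F ν a b ρ := Finset.sum_comm
    _ = ∑ b, ∑ ν, ∑ ρ, ∑ a, F ν a b ρ :=
        Finset.sum_congr rfl fun b _ => Finset.sum_congr rfl fun ν _ => Finset.sum_comm
    _ = ∑ b, ∑ ρ, ∑ ν, ∑ a, F ν a b ρ :=
        Finset.sum_congr rfl fun b _ => Finset.sum_comm

end Aux

section Geo
variable {n : ℕ} {G K : (Fin n → ℝ) → Fin n → Fin n → ℝ}

/-- `G·K = δ` from `K·G = δ` and symmetry. -/
lemma hGK (hGsym : ∀ q μ ν, G q μ ν = G q ν μ) (hKsym : ∀ q μ ν, K q μ ν = K q ν μ)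
    (hinv : ∀ q μ ν, (∑ ρ : Fin n, K q μ ρ * G q ρ ν) = if μ = ν then (1:ℝ) else 0) :
    ∀ (q : Fin n → ℝ) μ ν, (∑ ρ : Fin n, G q μ ρ * K q ρ ν) = if μ = ν then (1:ℝ) else 0 := by
  intro q μ ν
  calc ∑ ρ : Fin n, G q μ ρ * K q ρ ν = ∑ ρ : Fin n, K q ν ρ * G q ρ μ := by
        refine Finset.sum_congr rfl fun ρ _ => ?_
        rw [hGsym q μ ρ, hKsym q ρ ν]; ring
    _ = if ν = μ then 1 else 0 := hinv q ν μ
    _ = if μ = ν then 1 else 0 := by by_cases hμν : μ = ν <;> simp [hμν, eq_comm]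

/-- differentiating `K·G = δ`. -/
lemma KdG (hGs : ∀ μ ν, ContDiff ℝ (⊤ : ℕ∞) fun q => G q μ ν)
    (hKs : ∀ μ ν, ContDiff ℝ (⊤ : ℕ∞) fun q => K q μ ν)
    (hinv : ∀ q μ ν, (∑ ρ : Fin n, K q μ ρ * G q ρ ν) = if μ = ν then (1:ℝ) else 0) :
    ∀ (q : Fin n → ℝ) μ ν α, ∑ ρ : Fin n,
      (pd (fun p => K p μ ρ) α q * G q ρ ν + K q μ ρ * pd (fun p => G p ρ ν) α q) = 0 := by
  intro q μ ν α
  have hfun : (fun p => ∑ ρ : Fin n, K p μ ρ * G p ρ ν) = fun _ => (if μ = ν then (1:ℝ) else 0) :=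
    funext fun p => hinv p μ ν
  calc ∑ ρ : Fin n, (pd (fun p => K p μ ρ) α q * G q ρ ν + K q μ ρ * pd (fun p => G p ρ ν) α q)
      = ∑ ρ : Fin n, pd (fun p => K p μ ρ * G p ρ ν) α q :=
        Finset.sum_congr rfl fun ρ _ =>
          (Aux.pd_mul (Aux.cdiff (hKs μ ρ) q) (Aux.cdiff (hGs ρ ν) q) α).symm
    _ = pd (fun p => ∑ ρ : Fin n, K p μ ρ * G p ρ ν) α q :=
        (Aux.pd_sum Finset.univ
          (fun ρ _ => Aux.cdiff ((hKs μ ρ).mul (hGs ρ ν)) q) α).symm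
    _ = 0 := by rw [hfun]; simp [pd]

/-- derivative of `K` in terms of derivative of `G`. -/
lemma pdK (hGs : ∀ μ ν, ContDiff ℝ (⊤ : ℕ∞) fun q => G q μ ν)
    (hKs : ∀ μ ν, ContDiff ℝ (⊤ : ℕ∞) fun q => K q μ ν)
    (hGsym : ∀ q μ ν, G q μ ν = G q ν μ) (hKsym : ∀ q μ ν, K q μ ν = K q ν μ)
    (hinv : ∀ q μ ν, (∑ ρ : Fin n, K q μ ρ * G q ρ ν) = if μ = ν then (1:ℝ) else 0) :
    ∀ (q : Fin n → ℝ) a b lam, pd (fun p => K p a b) lam q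
      = -∑ ρ : Fin n, ∑ σ : Fin n, K q a ρ * pd (fun p => G p ρ σ) lam q * K q σ b := by
  intro q a b lam
  have key : ∀ σ, ∑ ρ : Fin n, pd (fun p => K p a ρ) lam q * G q ρ σ
      = -∑ ρ : Fin n, K q a ρ * pd (fun p => G p ρ σ) lam q := by
    intro σ
    have h0 := KdG hGs hKs hinv q a σ lam
    rw [Finset.sum_add_distrib] at h0
    linarith
  calc pd (fun p => K p a b) lam q
      = ∑ ρ : Fin n, pd (fun p => K p a ρ) lam q * (if ρ = b then (1:ℝ) else 0) := by simp
    _ = ∑ ρ : Fin n, pd (fun p => K p a ρ) lam q * (∑ σ : Fin n, G q ρ σ * K q σ b) := by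
        refine Finset.sum_congr rfl fun ρ _ => ?_
        rw [hGK hGsym hKsym hinv q ρ b]
    _ = ∑ ρ : Fin n, ∑ σ : Fin n, pd (fun p => K p a ρ) lam q * G q ρ σ * K q σ b := by
        refine Finset.sum_congr rfl fun ρ _ => ?_
        rw [Finset.mul_sum]
        exact Finset.sum_congr rfl fun σ _ => by ring
    _ = ∑ σ : Fin n, (∑ ρ : Fin n, pd (fun p => K p a ρ) lam q * G q ρ σ) * K q σ b := by
        rw [Finset.sum_comm]
        exact Finset.sum_congr rfl fun σ _ => (Finset.sum_mul _ _ _).symm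
    _ = ∑ σ : Fin n, (-∑ ρ : Fin n, K q a ρ * pd (fun p => G p ρ σ) lam q) * K q σ b := by
        exact Finset.sum_congr rfl fun σ _ => by rw [key σ]
    _ = ∑ σ : Fin n, -(∑ ρ : Fin n, K q a ρ * pd (fun p => G p ρ σ) lam q * K q σ b) := by
        refine Finset.sum_congr rfl fun σ _ => ?_
        rw [neg_mul, Finset.sum_mul]
    _ = -∑ σ : Fin n, ∑ ρ : Fin n, K q a ρ * pd (fun p => G p ρ σ) lam q * K q σ b := by
        rw [Finset.sum_neg_distrib]
    _ = -∑ ρ : Fin n, ∑ σ : Fin n, K q a ρ * pd (fun p => G p ρ σ) lam q * K q σ b :=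
        congrArg Neg.neg Finset.sum_comm

end Geo
noncomputable def trA {n : ℕ} (G K : (Fin n → ℝ) → Fin n → Fin n → ℝ)
    (q : Fin n → ℝ) (μ : Fin n) : ℝ :=
  ∑ ν : Fin n, ∑ ρ : Fin n, K q ν ρ * pd (fun p => G p ρ ν) μ q

section Geo2
variable {n : ℕ} {G K : (Fin n → ℝ) → Fin n → Fin n → ℝ}

lemma sum4_rev (F : Fin n → Fin n → Fin n → Fin n → ℝ) :
    ∑ x1, ∑ x2, ∑ x3, ∑ x4, F x1 x2 x3 x4 = ∑ x4, ∑ x3, ∑ x2, ∑ x1, F x1 x2 x3 x4 := by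
  calc ∑ x1, ∑ x2, ∑ x3, ∑ x4, F x1 x2 x3 x4
      = ∑ x3, ∑ x4, ∑ x1, ∑ x2, F x1 x2 x3 x4 := Aux.sum4_comm F
    _ = ∑ x4, ∑ x3, ∑ x1, ∑ x2, F x1 x2 x3 x4 := Finset.sum_comm
    _ = ∑ x4, ∑ x3, ∑ x2, ∑ x1, F x1 x2 x3 x4 :=
        Finset.sum_congr rfl fun _ _ => Finset.sum_congr rfl fun _ _ => Finset.sum_comm

lemma trA_smooth (hGs : ∀ μ ν, ContDiff ℝ (⊤ : ℕ∞) fun q => G q μ ν)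
    (hKs : ∀ μ ν, ContDiff ℝ (⊤ : ℕ∞) fun q => K q μ ν) (μ : Fin n) :
    ContDiff ℝ (⊤ : ℕ∞) (fun q => trA G K q μ) :=
  ContDiff.sum fun ν _ => ContDiff.sum fun ρ _ => (hKs ν ρ).mul (Aux.cpd (hGs ρ ν) μ)

lemma christoffel_smooth (hGs : ∀ μ ν, ContDiff ℝ (⊤ : ℕ∞) fun q => G q μ ν)
    (hKs : ∀ μ ν, ContDiff ℝ (⊤ : ℕ∞) fun q => K q μ ν) (κ μ ν : Fin n) :
    ContDiff ℝ (⊤ : ℕ∞) (fun q => christoffel G K q κ μ ν) := by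
  unfold christoffel
  exact contDiff_const.mul (ContDiff.sum fun ρ _ => (hKs κ ρ).mul
    (((Aux.cpd (hGs ρ ν) μ).add (Aux.cpd (hGs ρ μ) ν)).sub (Aux.cpd (hGs μ ν) ρ)))

lemma sumChristoffel (hGsym : ∀ q μ ν, G q μ ν = G q ν μ)
    (hKsym : ∀ q μ ν, K q μ ν = K q ν μ) (q : Fin n → ℝ) (μ : Fin n) :
    ∑ ν : Fin n, christoffel G K q ν μ ν = (1 / 2) * trA G K q μ := by
  unfold christoffel trA
  rw [← Finset.mul_sum]
  congr 1
  have swap : ∑ ν : Fin n, ∑ ρ : Fin n, K q ν ρ * pd (fun p => G p μ ν) ρ q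
      = ∑ ν : Fin n, ∑ ρ : Fin n, K q ν ρ * pd (fun p => G p ρ μ) ν q := by
    rw [Finset.sum_comm]
    refine Finset.sum_congr rfl fun ν _ => Finset.sum_congr rfl fun ρ _ => ?_
    rw [hKsym q ρ ν, show (fun p => G p μ ρ) = (fun p => G p ρ μ) from funext fun p => hGsym p μ ρ]
  calc ∑ ν : Fin n, ∑ ρ : Fin n, K q ν ρ *
        (pd (fun p => G p ρ ν) μ q + pd (fun p => G p ρ μ) ν q - pd (fun p => G p μ ν) ρ q)
      = ∑ ν : Fin n, ∑ ρ : Fin n, (K q ν ρ * pd (fun p => G p ρ ν) μ q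
          + (K q ν ρ * pd (fun p => G p ρ μ) ν q - K q ν ρ * pd (fun p => G p μ ν) ρ q)) :=
        Finset.sum_congr rfl fun ν _ => Finset.sum_congr rfl fun ρ _ => by ring
    _ = (∑ ν : Fin n, ∑ ρ : Fin n, K q ν ρ * pd (fun p => G p ρ ν) μ q)
        + ((∑ ν : Fin n, ∑ ρ : Fin n, K q ν ρ * pd (fun p => G p ρ μ) ν q)
          - (∑ ν : Fin n, ∑ ρ : Fin n, K q ν ρ * pd (fun p => G p μ ν) ρ q)) := by
        rw [← Finset.sum_sub_distrib, ← Finset.sum_add_distrib]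
        refine Finset.sum_congr rfl fun ν _ => ?_
        rw [← Finset.sum_sub_distrib, ← Finset.sum_add_distrib]
    _ = ∑ ν : Fin n, ∑ ρ : Fin n, K q ν ρ * pd (fun p => G p ρ ν) μ q := by
        rw [← swap, sub_self, add_zero]

lemma trA_closed (hGs : ∀ μ ν, ContDiff ℝ (⊤ : ℕ∞) fun q => G q μ ν)
    (hKs : ∀ μ ν, ContDiff ℝ (⊤ : ℕ∞) fun q => K q μ ν)
    (hGsym : ∀ q μ ν, G q μ ν = G q ν μ) (hKsym : ∀ q μ ν, K q μ ν = K q ν μ)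
    (hinv : ∀ q μ ν, (∑ ρ : Fin n, K q μ ρ * G q ρ ν) = if μ = ν then (1:ℝ) else 0)
    (q : Fin n → ℝ) (lam μ : Fin n) :
    pd (fun p => trA G K p μ) lam q = pd (fun p => trA G K p lam) μ q := by
  have expand : ∀ lam μ : Fin n, pd (fun p => trA G K p μ) lam q
      = (∑ ν : Fin n, ∑ ρ : Fin n, pd (fun p => K p ν ρ) lam q * pd (fun p => G p ρ ν) μ q)
        + (∑ ν : Fin n, ∑ ρ : Fin n,
            K q ν ρ * pd (fun p => pd (fun r => G r ρ ν) μ p) lam q) := by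
    intro lam μ
    calc pd (fun p => trA G K p μ) lam q
        = ∑ ν : Fin n, pd (fun p => ∑ ρ : Fin n, K p ν ρ * pd (fun r => G r ρ ν) μ p) lam q := by
          unfold trA
          exact Aux.pd_sum Finset.univ (fun ν _ => DifferentiableAt.fun_sum fun ρ _ =>
            (Aux.cdiff ((hKs ν ρ).mul (Aux.cpd (hGs ρ ν) μ)) q)) lam
      _ = ∑ ν : Fin n, ∑ ρ : Fin n, pd (fun p => K p ν ρ * pd (fun r => G r ρ ν) μ p) lam q :=
          Finset.sum_congr rfl fun ν _ => Aux.pd_sum Finset.univ (fun ρ _ =>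
            Aux.cdiff ((hKs ν ρ).mul (Aux.cpd (hGs ρ ν) μ)) q) lam
      _ = ∑ ν : Fin n, ∑ ρ : Fin n, (pd (fun p => K p ν ρ) lam q * pd (fun r => G r ρ ν) μ q
            + K q ν ρ * pd (fun p => pd (fun r => G r ρ ν) μ p) lam q) :=
          Finset.sum_congr rfl fun ν _ => Finset.sum_congr rfl fun ρ _ =>
            Aux.pd_mul (Aux.cdiff (hKs ν ρ) q) (Aux.cdiff (Aux.cpd (hGs ρ ν) μ) q) lam
      _ = _ := by
          rw [← Finset.sum_add_distrib]
          exact Finset.sum_congr rfl fun ν _ => by rw [← Finset.sum_add_distrib]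
  rw [expand lam μ, expand μ lam]
  have hS2 : (∑ ν : Fin n, ∑ ρ : Fin n, K q ν ρ * pd (fun p => pd (fun r => G r ρ ν) μ p) lam q)
      = ∑ ν : Fin n, ∑ ρ : Fin n, K q ν ρ * pd (fun p => pd (fun r => G r ρ ν) lam p) μ q :=
    Finset.sum_congr rfl fun ν _ => Finset.sum_congr rfl fun ρ _ => by
      rw [Aux.pd_comm (hGs ρ ν) lam μ q]
  have hS1 : (∑ ν : Fin n, ∑ ρ : Fin n, pd (fun p => K p ν ρ) lam q * pd (fun p => G p ρ ν) μ q)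
      = ∑ ν : Fin n, ∑ ρ : Fin n, pd (fun p => K p ν ρ) μ q * pd (fun p => G p ρ ν) lam q := by
    have subst : ∀ lam μ : Fin n,
        (∑ ν : Fin n, ∑ ρ : Fin n, pd (fun p => K p ν ρ) lam q * pd (fun p => G p ρ ν) μ q)
        = -∑ ν : Fin n, ∑ ρ : Fin n, ∑ a : Fin n, ∑ σ : Fin n,
            K q ν a * pd (fun p => G p a σ) lam q * K q σ ρ * pd (fun p => G p ρ ν) μ q := by
      intro lam μ
      calc (∑ ν : Fin n, ∑ ρ : Fin n, pd (fun p => K p ν ρ) lam q * pd (fun p => G p ρ ν) μ q)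
          = ∑ ν : Fin n, ∑ ρ : Fin n,
              (-∑ a : Fin n, ∑ σ : Fin n, K q ν a * pd (fun p => G p a σ) lam q * K q σ ρ)
                * pd (fun p => G p ρ ν) μ q :=
            Finset.sum_congr rfl fun ν _ => Finset.sum_congr rfl fun ρ _ => by
              rw [pdK hGs hKs hGsym hKsym hinv q ν ρ lam]
        _ = ∑ ν : Fin n, ∑ ρ : Fin n, -(∑ a : Fin n, ∑ σ : Fin n,
              K q ν a * pd (fun p => G p a σ) lam q * K q σ ρ * pd (fun p => G p ρ ν) μ q) := by
            refine Finset.sum_congr rfl fun ν _ => Finset.sum_congr rfl fun ρ _ => ?_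
            rw [neg_mul, Finset.sum_mul]
            refine congrArg Neg.neg (Finset.sum_congr rfl fun a _ => Finset.sum_mul _ _ _)
        _ = -∑ ν : Fin n, ∑ ρ : Fin n, ∑ a : Fin n, ∑ σ : Fin n,
              K q ν a * pd (fun p => G p a σ) lam q * K q σ ρ * pd (fun p => G p ρ ν) μ q := by
            rw [← Finset.sum_neg_distrib]
            exact Finset.sum_congr rfl fun ν _ => by rw [Finset.sum_neg_distrib]
    rw [subst lam μ, subst μ lam]
    refine congrArg Neg.neg ?_
    calc ∑ ν : Fin n, ∑ ρ : Fin n, ∑ a : Fin n, ∑ σ : Fin n,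
          K q ν a * pd (fun p => G p a σ) lam q * K q σ ρ * pd (fun p => G p ρ ν) μ q
        = ∑ σ : Fin n, ∑ a : Fin n, ∑ ρ : Fin n, ∑ ν : Fin n,
            K q ν a * pd (fun p => G p a σ) lam q * K q σ ρ * pd (fun p => G p ρ ν) μ q :=
          sum4_rev _
      _ = ∑ ν : Fin n, ∑ ρ : Fin n, ∑ a : Fin n, ∑ σ : Fin n,
            K q ν a * pd (fun p => G p a σ) μ q * K q σ ρ * pd (fun p => G p ρ ν) lam q :=
          Finset.sum_congr rfl fun ν _ => Finset.sum_congr rfl fun ρ _ =>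
            Finset.sum_congr rfl fun a _ => Finset.sum_congr rfl fun σ _ => by ring
  rw [hS1, hS2]

end Geo2
section Geo3
variable {n : ℕ} {G K : (Fin n → ℝ) → Fin n → Fin n → ℝ}
variable {ξ : (Fin n → ℝ) → Fin n → ℝ} {τ : (Fin n → ℝ) → ℝ}

lemma sum3_rot (F : Fin n → Fin n → Fin n → ℝ) :
    ∑ x, ∑ y, ∑ z, F x y z = ∑ z, ∑ x, ∑ y, F x y z := by
  calc ∑ x, ∑ y, ∑ z, F x y z = ∑ x, ∑ z, ∑ y, F x y z :=
        Finset.sum_congr rfl fun _ _ => Finset.sum_comm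
    _ = ∑ z, ∑ x, ∑ y, F x y z := Finset.sum_comm

lemma heart (hGsym : ∀ q μ ν, G q μ ν = G q ν μ) (hKsym : ∀ q μ ν, K q μ ν = K q ν μ)
    (hinv : ∀ q μ ν, (∑ ρ : Fin n, K q μ ρ * G q ρ ν) = if μ = ν then (1:ℝ) else 0)
    (hlieG : ∀ q μ ν, lieG ξ G q μ ν = τ q * G q μ ν) (q : Fin n → ℝ) :
    (∑ ρ : Fin n, ξ q ρ * trA G K q ρ) + 2 * (∑ ν : Fin n, pd (fun p => ξ p ν) ν q)
      = (n : ℝ) * τ q := by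
  have key : ∑ μ : Fin n, ∑ ν : Fin n, K q μ ν * lieG ξ G q μ ν = (n : ℝ) * τ q := by
    calc ∑ μ : Fin n, ∑ ν : Fin n, K q μ ν * lieG ξ G q μ ν
        = ∑ μ : Fin n, ∑ ν : Fin n, K q μ ν * (τ q * G q μ ν) :=
          Finset.sum_congr rfl fun μ _ => Finset.sum_congr rfl fun ν _ => by rw [hlieG q μ ν]
      _ = ∑ μ : Fin n, τ q * (∑ ν : Fin n, K q μ ν * G q ν μ) := by
          refine Finset.sum_congr rfl fun μ _ => ?_
          rw [Finset.mul_sum]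
          exact Finset.sum_congr rfl fun ν _ => by rw [hGsym q μ ν]; ring
      _ = ∑ μ : Fin n, τ q * (if μ = μ then (1:ℝ) else 0) :=
          Finset.sum_congr rfl fun μ _ => by rw [hinv q μ μ]
      _ = (n : ℝ) * τ q := by simp [Finset.card_univ, mul_comm]
  have expand : ∑ μ : Fin n, ∑ ν : Fin n, K q μ ν * lieG ξ G q μ ν
      = (∑ ρ : Fin n, ξ q ρ * trA G K q ρ) + 2 * (∑ ν : Fin n, pd (fun p => ξ p ν) ν q) := by
    have split : ∑ μ : Fin n, ∑ ν : Fin n, K q μ ν * lieG ξ G q μ ν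
        = (∑ μ : Fin n, ∑ ν : Fin n, ∑ α : Fin n, K q μ ν * (ξ q α * pd (fun p => G p μ ν) α q))
          + ((∑ μ : Fin n, ∑ ν : Fin n, ∑ α : Fin n, K q μ ν * (pd (fun p => ξ p α) μ q * G q α ν))
            + (∑ μ : Fin n, ∑ ν : Fin n, ∑ α : Fin n, K q μ ν * (pd (fun p => ξ p α) ν q * G q μ α))) := by
      have point : ∀ μ ν : Fin n, K q μ ν * lieG ξ G q μ ν
          = (∑ α : Fin n, K q μ ν * (ξ q α * pd (fun p => G p μ ν) α q))
            + ((∑ α : Fin n, K q μ ν * (pd (fun p => ξ p α) μ q * G q α ν))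
              + (∑ α : Fin n, K q μ ν * (pd (fun p => ξ p α) ν q * G q μ α))) := by
        intro μ ν
        unfold lieG
        rw [Finset.mul_sum]
        calc ∑ α : Fin n, K q μ ν * (ξ q α * pd (fun p => G p μ ν) α q
              + pd (fun p => ξ p α) μ q * G q α ν + pd (fun p => ξ p α) ν q * G q μ α)
            = ∑ α : Fin n, (K q μ ν * (ξ q α * pd (fun p => G p μ ν) α q)
              + (K q μ ν * (pd (fun p => ξ p α) μ q * G q α ν)
                + K q μ ν * (pd (fun p => ξ p α) ν q * G q μ α))) :=
              Finset.sum_congr rfl fun α _ => by ring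
          _ = _ := Aux.sum_split3 _ _ _
      calc ∑ μ : Fin n, ∑ ν : Fin n, K q μ ν * lieG ξ G q μ ν
          = ∑ μ : Fin n, ∑ ν : Fin n,
              ((∑ α : Fin n, K q μ ν * (ξ q α * pd (fun p => G p μ ν) α q))
              + ((∑ α : Fin n, K q μ ν * (pd (fun p => ξ p α) μ q * G q α ν))
                + (∑ α : Fin n, K q μ ν * (pd (fun p => ξ p α) ν q * G q μ α)))) :=
            Finset.sum_congr rfl fun μ _ => Finset.sum_congr rfl fun ν _ => point μ ν
        _ = ∑ μ : Fin n,
              ((∑ ν : Fin n, ∑ α : Fin n, K q μ ν * (ξ q α * pd (fun p => G p μ ν) α q))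
              + ((∑ ν : Fin n, ∑ α : Fin n, K q μ ν * (pd (fun p => ξ p α) μ q * G q α ν))
                + (∑ ν : Fin n, ∑ α : Fin n, K q μ ν * (pd (fun p => ξ p α) ν q * G q μ α)))) :=
            Finset.sum_congr rfl fun μ _ => Aux.sum_split3 _ _ _
        _ = _ := Aux.sum_split3 _ _ _
    have hA : (∑ μ : Fin n, ∑ ν : Fin n, ∑ α : Fin n, K q μ ν * (ξ q α * pd (fun p => G p μ ν) α q))
        = ∑ ρ : Fin n, ξ q ρ * trA G K q ρ := by
      rw [sum3_rot]
      refine Finset.sum_congr rfl fun α _ => ?_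
      unfold trA
      rw [Finset.mul_sum]
      refine Finset.sum_congr rfl fun μ _ => ?_
      rw [Finset.mul_sum]
      refine Finset.sum_congr rfl fun ν _ => ?_
      rw [show (fun p => G p μ ν) = (fun p => G p ν μ) from funext fun p => hGsym p μ ν]
      ring
    have hB : (∑ μ : Fin n, ∑ ν : Fin n, ∑ α : Fin n, K q μ ν * (pd (fun p => ξ p α) μ q * G q α ν))
        = ∑ ν : Fin n, pd (fun p => ξ p ν) ν q := by
      calc ∑ μ : Fin n, ∑ ν : Fin n, ∑ α : Fin n, K q μ ν * (pd (fun p => ξ p α) μ q * G q α ν)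
          = ∑ μ : Fin n, ∑ α : Fin n, pd (fun p => ξ p α) μ q * (∑ ν : Fin n, K q μ ν * G q ν α) := by
            refine Finset.sum_congr rfl fun μ _ => ?_
            rw [Finset.sum_comm]
            refine Finset.sum_congr rfl fun α _ => ?_
            rw [Finset.mul_sum]
            exact Finset.sum_congr rfl fun ν _ => by rw [hGsym q α ν]; ring
        _ = ∑ μ : Fin n, ∑ α : Fin n, pd (fun p => ξ p α) μ q * (if μ = α then (1:ℝ) else 0) :=
            Finset.sum_congr rfl fun μ _ => Finset.sum_congr rfl fun α _ => by rw [hinv q μ α]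
        _ = ∑ ν : Fin n, pd (fun p => ξ p ν) ν q := by simp
    have hC : (∑ μ : Fin n, ∑ ν : Fin n, ∑ α : Fin n, K q μ ν * (pd (fun p => ξ p α) ν q * G q μ α))
        = ∑ ν : Fin n, pd (fun p => ξ p ν) ν q := by
      calc ∑ μ : Fin n, ∑ ν : Fin n, ∑ α : Fin n, K q μ ν * (pd (fun p => ξ p α) ν q * G q μ α)
          = ∑ ν : Fin n, ∑ α : Fin n, ∑ μ : Fin n, K q μ ν * (pd (fun p => ξ p α) ν q * G q μ α) := by
            rw [sum3_rot, sum3_rot]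
        _ = ∑ ν : Fin n, ∑ α : Fin n, pd (fun p => ξ p α) ν q * (∑ μ : Fin n, K q ν μ * G q μ α) := by
            refine Finset.sum_congr rfl fun ν _ => Finset.sum_congr rfl fun α _ => ?_
            rw [Finset.mul_sum]
            exact Finset.sum_congr rfl fun μ _ => by rw [hKsym q μ ν]; ring
        _ = ∑ ν : Fin n, ∑ α : Fin n, pd (fun p => ξ p α) ν q * (if ν = α then (1:ℝ) else 0) :=
            Finset.sum_congr rfl fun ν _ => Finset.sum_congr rfl fun α _ => by rw [hinv q ν α]
        _ = ∑ ν : Fin n, pd (fun p => ξ p ν) ν q := by simp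
    rw [split, hA, hB, hC]; ring
  rw [← expand, key]

end Geo3
section Geo4
variable {n : ℕ} {G K : (Fin n → ℝ) → Fin n → Fin n → ℝ}
variable {ξ : (Fin n → ℝ) → Fin n → ℝ} {τ : (Fin n → ℝ) → ℝ}

lemma pd_heart (hGs : ∀ μ ν, ContDiff ℝ (⊤ : ℕ∞) fun q => G q μ ν)
    (hKs : ∀ μ ν, ContDiff ℝ (⊤ : ℕ∞) fun q => K q μ ν)
    (hGsym : ∀ q μ ν, G q μ ν = G q ν μ) (hKsym : ∀ q μ ν, K q μ ν = K q ν μ)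
    (hinv : ∀ q μ ν, (∑ ρ : Fin n, K q μ ρ * G q ρ ν) = if μ = ν then (1:ℝ) else 0)
    (hlieG : ∀ q μ ν, lieG ξ G q μ ν = τ q * G q μ ν)
    (hξs : ContDiff ℝ (⊤ : ℕ∞) ξ) (hτs : ContDiff ℝ (⊤ : ℕ∞) τ)
    (q : Fin n → ℝ) (μ : Fin n) :
    (∑ ρ : Fin n, (pd (fun p => ξ p ρ) μ q * trA G K q ρ
        + ξ q ρ * pd (fun p => trA G K p ρ) μ q))
      + 2 * pd (fun p => ∑ ν : Fin n, pd (fun r => ξ r ν) ν p) μ q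
      = (n : ℝ) * pd τ μ q := by
  have hξc : ∀ α, ContDiff ℝ (⊤ : ℕ∞) (fun q => ξ q α) := fun α => contDiff_pi.1 hξs α
  have hfun : (fun p => (∑ ρ : Fin n, ξ p ρ * trA G K p ρ)
      + 2 * (∑ ν : Fin n, pd (fun r => ξ r ν) ν p)) = fun p => (n : ℝ) * τ p :=
    funext fun p => heart hGsym hKsym hinv hlieG p
  have hd1 : Differentiable ℝ (fun p => ∑ ρ : Fin n, ξ p ρ * trA G K p ρ) :=
    Aux.cdiff (ContDiff.sum fun ρ _ => (hξc ρ).mul (trA_smooth hGs hKs ρ))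
  have hd2 : Differentiable ℝ (fun p => ∑ ν : Fin n, pd (fun r => ξ r ν) ν p) :=
    Aux.cdiff (ContDiff.sum fun ν _ => Aux.cpd (hξc ν) ν)
  have h0 : pd (fun p => (∑ ρ : Fin n, ξ p ρ * trA G K p ρ)
      + 2 * (∑ ν : Fin n, pd (fun r => ξ r ν) ν p)) μ q = (n : ℝ) * pd τ μ q := by
    rw [hfun]; exact Aux.pd_const_mul (Aux.cdiff hτs q) _ μ
  have e1 : pd (fun p => ∑ ρ : Fin n, ξ p ρ * trA G K p ρ) μ q
      = ∑ ρ : Fin n, (pd (fun p => ξ p ρ) μ q * trA G K q ρ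
          + ξ q ρ * pd (fun p => trA G K p ρ) μ q) := by
    rw [Aux.pd_sum Finset.univ
      (fun ρ _ => (Aux.cdiff ((hξc ρ).mul (trA_smooth hGs hKs ρ))) q) μ]
    exact Finset.sum_congr rfl fun ρ _ =>
      Aux.pd_mul (Aux.cdiff (hξc ρ) q) (Aux.cdiff (trA_smooth hGs hKs ρ) q) μ
  have e2 : pd (fun p => 2 * (∑ ν : Fin n, pd (fun r => ξ r ν) ν p)) μ q
      = 2 * pd (fun p => ∑ ν : Fin n, pd (fun r => ξ r ν) ν p) μ q :=
    Aux.pd_const_mul (hd2 q) 2 μ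
  rw [Aux.pd_add (hd1 q) ((hd2.const_mul 2) q) μ, e1, e2] at h0
  exact h0

lemma sum_split_lg {m : ℕ} (f g h i j : Fin m → ℝ) :
    ∑ x, (f x - g x + h x + i x + j x)
      = (∑ x, f x) - (∑ x, g x) + (∑ x, h x) + (∑ x, i x) + (∑ x, j x) := by
  rw [Finset.sum_add_distrib, Finset.sum_add_distrib, Finset.sum_add_distrib,
    Finset.sum_sub_distrib]

lemma lieGamma_contract (hGs : ∀ μ ν, ContDiff ℝ (⊤ : ℕ∞) fun q => G q μ ν)
    (hKs : ∀ μ ν, ContDiff ℝ (⊤ : ℕ∞) fun q => K q μ ν)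
    (hGsym : ∀ q μ ν, G q μ ν = G q ν μ) (hKsym : ∀ q μ ν, K q μ ν = K q ν μ)
    (hinv : ∀ q μ ν, (∑ ρ : Fin n, K q μ ρ * G q ρ ν) = if μ = ν then (1:ℝ) else 0)
    (hlieG : ∀ q μ ν, lieG ξ G q μ ν = τ q * G q μ ν)
    (hξs : ContDiff ℝ (⊤ : ℕ∞) ξ) (hτs : ContDiff ℝ (⊤ : ℕ∞) τ)
    (q : Fin n → ℝ) (μ : Fin n) :
    ∑ ν : Fin n, lieGamma ξ (christoffel G K) q ν μ ν = (n : ℝ) / 2 * pd τ μ q := by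
  have hξc : ∀ α, ContDiff ℝ (⊤ : ℕ∞) (fun q => ξ q α) := fun α => contDiff_pi.1 hξs α
  have hT1 : ∑ ν : Fin n, ∑ ρ : Fin n, ξ q ρ * pd (fun p => christoffel G K p ν μ ν) ρ q
      = 1 / 2 * ∑ ρ : Fin n, ξ q ρ * pd (fun p => trA G K p ρ) μ q := by
    rw [Finset.sum_comm, Finset.mul_sum]
    refine Finset.sum_congr rfl fun ρ _ => ?_
    calc ∑ ν : Fin n, ξ q ρ * pd (fun p => christoffel G K p ν μ ν) ρ q
        = ξ q ρ * ∑ ν : Fin n, pd (fun p => christoffel G K p ν μ ν) ρ q :=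
          (Finset.mul_sum _ _ _).symm
      _ = ξ q ρ * pd (fun p => ∑ ν : Fin n, christoffel G K p ν μ ν) ρ q := by
          rw [Aux.pd_sum Finset.univ
            (fun ν _ => Aux.cdiff (christoffel_smooth hGs hKs ν μ ν) q) ρ]
      _ = ξ q ρ * pd (fun p => 1 / 2 * trA G K p μ) ρ q := by
          rw [show (fun p => ∑ ν : Fin n, christoffel G K p ν μ ν)
              = fun p => 1 / 2 * trA G K p μ from
            funext fun p => sumChristoffel hGsym hKsym p μ]
      _ = ξ q ρ * (1 / 2 * pd (fun p => trA G K p μ) ρ q) := by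
          rw [Aux.pd_const_mul (Aux.cdiff (trA_smooth hGs hKs μ) q) _ ρ]
      _ = 1 / 2 * (ξ q ρ * pd (fun p => trA G K p ρ) μ q) := by
          rw [trA_closed hGs hKs hGsym hKsym hinv q ρ μ]; ring
  have hT24 : (∑ ν : Fin n, ∑ ρ : Fin n,
        pd (fun p => ξ p ρ) ν q * christoffel G K q ν μ ρ)
      = ∑ ν : Fin n, ∑ ρ : Fin n, pd (fun p => ξ p ν) ρ q * christoffel G K q ρ μ ν :=
    Finset.sum_comm
  have hT3 : ∑ ν : Fin n, ∑ ρ : Fin n, pd (fun p => ξ p ρ) μ q * christoffel G K q ν ρ ν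
      = 1 / 2 * ∑ ρ : Fin n, pd (fun p => ξ p ρ) μ q * trA G K q ρ := by
    rw [Finset.sum_comm, Finset.mul_sum]
    refine Finset.sum_congr rfl fun ρ _ => ?_
    rw [← Finset.mul_sum, sumChristoffel hGsym hKsym q ρ]; ring
  have hT5 : ∑ ν : Fin n, pd (fun p => pd (fun r => ξ r ν) ν p) μ q
      = pd (fun p => ∑ ν : Fin n, pd (fun r => ξ r ν) ν p) μ q :=
    (Aux.pd_sum Finset.univ (fun ν _ => Aux.cdiff (Aux.cpd (hξc ν) ν) q) μ).symm
  have hph := pd_heart hGs hKs hGsym hKsym hinv hlieG hξs hτs q μ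
  rw [Finset.sum_add_distrib] at hph
  unfold lieGamma
  rw [sum_split_lg, hT1, hT24, hT3, hT5]
  linarith [hph]

end Geo4
section Geo5
variable {n : ℕ} {G K : (Fin n → ℝ) → Fin n → Fin n → ℝ}
variable {ξ : (Fin n → ℝ) → Fin n → ℝ} {τ h V : (Fin n → ℝ) → ℝ}

/-- contraction of `£G = τ G` with `ξ`. -/
lemma xiDG (hlieG : ∀ q μ ν, lieG ξ G q μ ν = τ q * G q μ ν) (q : Fin n → ℝ) (a b : Fin n) :
    ∑ ρ : Fin n, ξ q ρ * pd (fun p => G p a b) ρ q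
      = τ q * G q a b - (∑ c : Fin n, pd (fun p => ξ p c) a q * G q c b)
        - (∑ c : Fin n, pd (fun p => ξ p c) b q * G q a c) := by
  have e := hlieG q a b
  unfold lieG at e
  rw [Finset.sum_add_distrib, Finset.sum_add_distrib] at e
  linarith

/-- second derivatives of `V` contracted with `ξ`, from `£V = (τ-2h)V`. -/
lemma xiDDV (hVs : ContDiff ℝ (⊤ : ℕ∞) V) (hτs : ContDiff ℝ (⊤ : ℕ∞) τ)
    (hhs : ContDiff ℝ (⊤ : ℕ∞) h) (hξs : ContDiff ℝ (⊤ : ℕ∞) ξ)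
    (hlieV : ∀ q, lieV ξ V q = (τ q - 2 * h q) * V q) (q : Fin n → ℝ) (μ : Fin n) :
    ∑ ρ : Fin n, ξ q ρ * pd (fun p => pd V ρ p) μ q
      = (pd τ μ q - 2 * pd h μ q) * V q + (τ q - 2 * h q) * pd V μ q
        - ∑ ρ : Fin n, pd (fun p => ξ p ρ) μ q * pd V ρ q := by
  have hξc : ∀ α, ContDiff ℝ (⊤ : ℕ∞) (fun q => ξ q α) := fun α => contDiff_pi.1 hξs α
  have hfun : (fun p => ∑ ρ : Fin n, ξ p ρ * pd V ρ p)
      = fun p => (τ p - 2 * h p) * V p := funext fun p => hlieV p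
  have hL : pd (fun p => ∑ ρ : Fin n, ξ p ρ * pd V ρ p) μ q
      = ∑ ρ : Fin n, (pd (fun p => ξ p ρ) μ q * pd V ρ q
          + ξ q ρ * pd (fun p => pd V ρ p) μ q) := by
    rw [Aux.pd_sum Finset.univ
      (fun ρ _ => Aux.cdiff ((hξc ρ).mul (Aux.cpd hVs ρ)) q) μ]
    exact Finset.sum_congr rfl fun ρ _ =>
      Aux.pd_mul (Aux.cdiff (hξc ρ) q) (Aux.cdiff (Aux.cpd hVs ρ) q) μ
  have hR : pd (fun p => (τ p - 2 * h p) * V p) μ q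
      = (pd τ μ q - 2 * pd h μ q) * V q + (τ q - 2 * h q) * pd V μ q := by
    rw [Aux.pd_mul (f := fun p => τ p - 2 * h p) (((Aux.cdiff hτs).sub ((Aux.cdiff hhs).const_mul 2)) q) (Aux.cdiff hVs q) μ,
      Aux.pd_sub (Aux.cdiff hτs q) (((Aux.cdiff hhs).const_mul 2) q) μ,
      Aux.pd_const_mul (Aux.cdiff hhs q) 2 μ]
  rw [hfun, hR] at hL
  rw [Finset.sum_add_distrib] at hL
  linarith

/-- contraction of `∂K` with `ξ`: `£K = -τ K`. -/
lemma xiDK (hGs : ∀ μ ν, ContDiff ℝ (⊤ : ℕ∞) fun q => G q μ ν)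
    (hKs : ∀ μ ν, ContDiff ℝ (⊤ : ℕ∞) fun q => K q μ ν)
    (hGsym : ∀ q μ ν, G q μ ν = G q ν μ) (hKsym : ∀ q μ ν, K q μ ν = K q ν μ)
    (hinv : ∀ q μ ν, (∑ ρ : Fin n, K q μ ρ * G q ρ ν) = if μ = ν then (1:ℝ) else 0)
    (hlieG : ∀ q μ ν, lieG ξ G q μ ν = τ q * G q μ ν) (q : Fin n → ℝ) (a b : Fin n) :
    ∑ ρ : Fin n, ξ q ρ * pd (fun p => K p a b) ρ q
      = -(τ q * K q a b) + (∑ c : Fin n, K q a c * pd (fun p => ξ p b) c q)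
        + (∑ c : Fin n, K q c b * pd (fun p => ξ p a) c q) := by
  have e1 : ∑ ρ : Fin n, ξ q ρ * pd (fun p => K p a b) ρ q
      = -∑ c : Fin n, ∑ σ : Fin n, K q a c * K q σ b
          * (∑ ρ : Fin n, ξ q ρ * pd (fun p => G p c σ) ρ q) := by
    calc ∑ ρ : Fin n, ξ q ρ * pd (fun p => K p a b) ρ q
        = ∑ ρ : Fin n, -(∑ c : Fin n, ∑ σ : Fin n,
            K q a c * K q σ b * (ξ q ρ * pd (fun p => G p c σ) ρ q)) := by
          refine Finset.sum_congr rfl fun ρ _ => ?_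
          rw [pdK hGs hKs hGsym hKsym hinv q a b ρ, mul_neg, Finset.mul_sum]
          refine congrArg Neg.neg (Finset.sum_congr rfl fun c _ => ?_)
          rw [Finset.mul_sum]
          exact Finset.sum_congr rfl fun σ _ => by ring
      _ = -∑ ρ : Fin n, ∑ c : Fin n, ∑ σ : Fin n,
            K q a c * K q σ b * (ξ q ρ * pd (fun p => G p c σ) ρ q) := by
          rw [Finset.sum_neg_distrib]
      _ = -∑ c : Fin n, ∑ σ : Fin n, ∑ ρ : Fin n,
            K q a c * K q σ b * (ξ q ρ * pd (fun p => G p c σ) ρ q) := by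
          rw [sum3_rot, sum3_rot]
      _ = _ := by
          refine congrArg Neg.neg (Finset.sum_congr rfl fun c _ =>
            Finset.sum_congr rfl fun σ _ => ?_)
          rw [Finset.mul_sum]
  rw [e1]
  have e2 : ∑ c : Fin n, ∑ σ : Fin n, K q a c * K q σ b
      * (∑ ρ : Fin n, ξ q ρ * pd (fun p => G p c σ) ρ q)
      = (∑ c : Fin n, ∑ σ : Fin n, K q a c * K q σ b * (τ q * G q c σ))
        - (∑ c : Fin n, ∑ σ : Fin n, K q a c * K q σ b
            * (∑ d : Fin n, pd (fun p => ξ p d) c q * G q d σ))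
        - (∑ c : Fin n, ∑ σ : Fin n, K q a c * K q σ b
            * (∑ d : Fin n, pd (fun p => ξ p d) σ q * G q c d)) := by
    rw [← Finset.sum_sub_distrib, ← Finset.sum_sub_distrib]
    refine Finset.sum_congr rfl fun c _ => ?_
    rw [← Finset.sum_sub_distrib, ← Finset.sum_sub_distrib]
    refine Finset.sum_congr rfl fun σ _ => ?_
    rw [xiDG hlieG q c σ]
    ring
  rw [e2]
  -- now collapse each of the three pieces
  have p1 : ∑ c : Fin n, ∑ σ : Fin n, K q a c * K q σ b * (τ q * G q c σ)
      = τ q * K q a b := by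
    calc ∑ c : Fin n, ∑ σ : Fin n, K q a c * K q σ b * (τ q * G q c σ)
        = ∑ c : Fin n, τ q * K q a c * (∑ σ : Fin n, G q c σ * K q σ b) := by
          refine Finset.sum_congr rfl fun c _ => ?_
          rw [Finset.mul_sum]
          exact Finset.sum_congr rfl fun σ _ => by ring
      _ = ∑ c : Fin n, τ q * K q a c * (if c = b then (1:ℝ) else 0) :=
          Finset.sum_congr rfl fun c _ => by rw [hGK hGsym hKsym hinv q c b]
      _ = τ q * K q a b := by simp
  have p2 : ∑ c : Fin n, ∑ σ : Fin n, K q a c * K q σ b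
      * (∑ d : Fin n, pd (fun p => ξ p d) c q * G q d σ)
      = ∑ c : Fin n, K q a c * pd (fun p => ξ p b) c q := by
    calc ∑ c : Fin n, ∑ σ : Fin n, K q a c * K q σ b
        * (∑ d : Fin n, pd (fun p => ξ p d) c q * G q d σ)
        = ∑ c : Fin n, ∑ σ : Fin n, ∑ d : Fin n,
            K q a c * pd (fun p => ξ p d) c q * (G q d σ * K q σ b) := by
          refine Finset.sum_congr rfl fun c _ => Finset.sum_congr rfl fun σ _ => ?_
          rw [Finset.mul_sum]
          exact Finset.sum_congr rfl fun d _ => by ring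
      _ = ∑ c : Fin n, ∑ d : Fin n, ∑ σ : Fin n,
            K q a c * pd (fun p => ξ p d) c q * (G q d σ * K q σ b) :=
          Finset.sum_congr rfl fun c _ => Finset.sum_comm
      _ = ∑ c : Fin n, ∑ d : Fin n,
            K q a c * pd (fun p => ξ p d) c q * (∑ σ : Fin n, G q d σ * K q σ b) :=
          Finset.sum_congr rfl fun c _ => Finset.sum_congr rfl fun d _ =>
            (Finset.mul_sum _ _ _).symm
      _ = ∑ c : Fin n, ∑ d : Fin n,
            K q a c * pd (fun p => ξ p d) c q * (if d = b then (1:ℝ) else 0) :=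
          Finset.sum_congr rfl fun c _ => Finset.sum_congr rfl fun d _ => by
            rw [hGK hGsym hKsym hinv q d b]
      _ = ∑ c : Fin n, K q a c * pd (fun p => ξ p b) c q := by simp
  have p3 : ∑ c : Fin n, ∑ σ : Fin n, K q a c * K q σ b
      * (∑ d : Fin n, pd (fun p => ξ p d) σ q * G q c d)
      = ∑ c : Fin n, K q c b * pd (fun p => ξ p a) c q := by
    calc ∑ c : Fin n, ∑ σ : Fin n, K q a c * K q σ b
        * (∑ d : Fin n, pd (fun p => ξ p d) σ q * G q c d)
        = ∑ σ : Fin n, ∑ c : Fin n, ∑ d : Fin n,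
            K q σ b * pd (fun p => ξ p d) σ q * (K q a c * G q c d) := by
          rw [Finset.sum_comm]
          refine Finset.sum_congr rfl fun σ _ => Finset.sum_congr rfl fun c _ => ?_
          rw [Finset.mul_sum]
          exact Finset.sum_congr rfl fun d _ => by ring
      _ = ∑ σ : Fin n, ∑ d : Fin n, ∑ c : Fin n,
            K q σ b * pd (fun p => ξ p d) σ q * (K q a c * G q c d) :=
          Finset.sum_congr rfl fun σ _ => Finset.sum_comm
      _ = ∑ σ : Fin n, ∑ d : Fin n,
            K q σ b * pd (fun p => ξ p d) σ q * (∑ c : Fin n, K q a c * G q c d) :=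
          Finset.sum_congr rfl fun σ _ => Finset.sum_congr rfl fun d _ =>
            (Finset.mul_sum _ _ _).symm
      _ = ∑ σ : Fin n, ∑ d : Fin n,
            K q σ b * pd (fun p => ξ p d) σ q * (if a = d then (1:ℝ) else 0) :=
          Finset.sum_congr rfl fun σ _ => Finset.sum_congr rfl fun d _ => by
            rw [hinv q a d]
      _ = ∑ c : Fin n, K q c b * pd (fun p => ξ p a) c q := by simp
  rw [p1, p2, p3]
  ring
end Geo5
section Geo6
variable {n : ℕ} {G K : (Fin n → ℝ) → Fin n → Fin n → ℝ}
variable {ξ : (Fin n → ℝ) → Fin n → ℝ} {τ h V : (Fin n → ℝ) → ℝ}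

lemma lieW_formula (hGs : ∀ μ ν, ContDiff ℝ (⊤ : ℕ∞) fun q => G q μ ν)
    (hKs : ∀ μ ν, ContDiff ℝ (⊤ : ℕ∞) fun q => K q μ ν)
    (hGsym : ∀ q μ ν, G q μ ν = G q ν μ) (hKsym : ∀ q μ ν, K q μ ν = K q ν μ)
    (hinv : ∀ q μ ν, (∑ ρ : Fin n, K q μ ρ * G q ρ ν) = if μ = ν then (1:ℝ) else 0)
    (hVs : ContDiff ℝ (⊤ : ℕ∞) V) (hτs : ContDiff ℝ (⊤ : ℕ∞) τ)
    (hhs : ContDiff ℝ (⊤ : ℕ∞) h) (hξs : ContDiff ℝ (⊤ : ℕ∞) ξ)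
    (hlieG : ∀ q μ ν, lieG ξ G q μ ν = τ q * G q μ ν)
    (hlieV : ∀ q, lieV ξ V q = (τ q - 2 * h q) * V q)
    (q : Fin n → ℝ) (α : Fin n) :
    lieW ξ (gradV K V) q α = -2 * h q * gradV K V q α
      + V q * ∑ σ : Fin n, K q α σ * (pd τ σ q - 2 * pd h σ q) := by
  have hξc : ∀ β, ContDiff ℝ (⊤ : ℕ∞) (fun q => ξ q β) := fun β => contDiff_pi.1 hξs β
  set T : ℝ := ∑ σ : Fin n, ∑ ρ : Fin n,
    K q α σ * (pd (fun p => ξ p ρ) σ q * pd V ρ q) with hT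
  have step1 : ∀ ρ : Fin n, pd (fun p => gradV K V p α) ρ q
      = ∑ σ : Fin n, (pd (fun p => K p α σ) ρ q * pd V σ q
          + K q α σ * pd (fun p => pd V σ p) ρ q) := by
    intro ρ
    unfold gradV
    rw [Aux.pd_sum Finset.univ (fun σ _ => Aux.cdiff ((hKs α σ).mul (Aux.cpd hVs σ)) q) ρ]
    exact Finset.sum_congr rfl fun σ _ =>
      Aux.pd_mul (Aux.cdiff (hKs α σ) q) (Aux.cdiff (Aux.cpd hVs σ) q) ρ
  have split : lieW ξ (gradV K V) q α
      = (∑ σ : Fin n, pd V σ q * (∑ ρ : Fin n, ξ q ρ * pd (fun p => K p α σ) ρ q))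
        + (∑ σ : Fin n, K q α σ * (∑ ρ : Fin n, ξ q ρ * pd (fun p => pd V σ p) ρ q))
        - (∑ ρ : Fin n, gradV K V q ρ * pd (fun p => ξ p α) ρ q) := by
    unfold lieW
    rw [Finset.sum_sub_distrib]
    congr 1
    calc ∑ ρ : Fin n, ξ q ρ * pd (fun p => gradV K V p α) ρ q
        = ∑ ρ : Fin n, ∑ σ : Fin n,
            (ξ q ρ * (pd (fun p => K p α σ) ρ q * pd V σ q)
              + ξ q ρ * (K q α σ * pd (fun p => pd V σ p) ρ q)) := by
          refine Finset.sum_congr rfl fun ρ _ => ?_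
          rw [step1 ρ, Finset.mul_sum]
          exact Finset.sum_congr rfl fun σ _ => by ring
      _ = (∑ ρ : Fin n, ∑ σ : Fin n, ξ q ρ * (pd (fun p => K p α σ) ρ q * pd V σ q))
          + (∑ ρ : Fin n, ∑ σ : Fin n, ξ q ρ * (K q α σ * pd (fun p => pd V σ p) ρ q)) := by
          rw [← Finset.sum_add_distrib]
          exact Finset.sum_congr rfl fun ρ _ => Finset.sum_add_distrib
      _ = _ := by
          congr 1
          · rw [Finset.sum_comm]
            refine Finset.sum_congr rfl fun σ _ => ?_
            rw [Finset.mul_sum]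
            exact Finset.sum_congr rfl fun ρ _ => by ring
          · rw [Finset.sum_comm]
            refine Finset.sum_congr rfl fun σ _ => ?_
            rw [Finset.mul_sum]
            exact Finset.sum_congr rfl fun ρ _ => by ring
  have hX1 : (∑ σ : Fin n, pd V σ q * (∑ ρ : Fin n, ξ q ρ * pd (fun p => K p α σ) ρ q))
      = -(τ q * gradV K V q α) + T
        + (∑ ρ : Fin n, gradV K V q ρ * pd (fun p => ξ p α) ρ q) := by
    have e : ∀ σ : Fin n, pd V σ q * (∑ ρ : Fin n, ξ q ρ * pd (fun p => K p α σ) ρ q)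
        = -(τ q * (K q α σ * pd V σ q))
          + (∑ c : Fin n, pd V σ q * (K q α c * pd (fun p => ξ p σ) c q))
          + (∑ c : Fin n, pd V σ q * (K q c σ * pd (fun p => ξ p α) c q)) := by
      intro σ
      rw [xiDK hGs hKs hGsym hKsym hinv hlieG q α σ, mul_add, mul_add]
      congr 1
      · congr 1
        · ring
        · rw [Finset.mul_sum]
      · rw [Finset.mul_sum]
    rw [Finset.sum_congr rfl fun σ _ => e σ]
    rw [Finset.sum_add_distrib, Finset.sum_add_distrib]
    congr 1
    · congr 1
      · -- -(τ gradV)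
        rw [Finset.sum_neg_distrib]
        refine congrArg Neg.neg ?_
        unfold gradV
        rw [Finset.mul_sum]
      · -- = T
        rw [hT, Finset.sum_comm]
        exact Finset.sum_congr rfl fun σ _ => Finset.sum_congr rfl fun c _ => by ring
    · -- = X3
      rw [Finset.sum_comm]
      refine Finset.sum_congr rfl fun c _ => ?_
      unfold gradV
      rw [Finset.sum_mul]
      exact Finset.sum_congr rfl fun σ _ => by ring
  have e2 : ∀ σ : Fin n, (∑ ρ : Fin n, ξ q ρ * pd (fun p => pd V σ p) ρ q)
      = (pd τ σ q - 2 * pd h σ q) * V q + (τ q - 2 * h q) * pd V σ q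
        - ∑ ρ : Fin n, pd (fun p => ξ p ρ) σ q * pd V ρ q := by
    intro σ
    calc ∑ ρ : Fin n, ξ q ρ * pd (fun p => pd V σ p) ρ q
        = ∑ ρ : Fin n, ξ q ρ * pd (fun p => pd V ρ p) σ q :=
          Finset.sum_congr rfl fun ρ _ => by rw [Aux.pd_comm hVs ρ σ q]
      _ = _ := xiDDV hVs hτs hhs hξs hlieV q σ
  have hX2 : (∑ σ : Fin n, K q α σ * (∑ ρ : Fin n, ξ q ρ * pd (fun p => pd V σ p) ρ q))
      = V q * (∑ σ : Fin n, K q α σ * (pd τ σ q - 2 * pd h σ q))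
        + (τ q - 2 * h q) * gradV K V q α - T := by
    calc ∑ σ : Fin n, K q α σ * (∑ ρ : Fin n, ξ q ρ * pd (fun p => pd V σ p) ρ q)
        = ∑ σ : Fin n, (V q * (K q α σ * (pd τ σ q - 2 * pd h σ q))
            + (τ q - 2 * h q) * (K q α σ * pd V σ q)
            - K q α σ * (∑ ρ : Fin n, pd (fun p => ξ p ρ) σ q * pd V ρ q)) := by
          refine Finset.sum_congr rfl fun σ _ => ?_
          rw [e2 σ]
          ring
      _ = (∑ σ : Fin n, V q * (K q α σ * (pd τ σ q - 2 * pd h σ q)))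
          + (∑ σ : Fin n, (τ q - 2 * h q) * (K q α σ * pd V σ q))
          - (∑ σ : Fin n, K q α σ * (∑ ρ : Fin n, pd (fun p => ξ p ρ) σ q * pd V ρ q)) := by
          rw [Finset.sum_sub_distrib, Finset.sum_add_distrib]
      _ = V q * (∑ σ : Fin n, K q α σ * (pd τ σ q - 2 * pd h σ q))
          + (τ q - 2 * h q) * gradV K V q α - T := by
          congr 1
          · congr 1
            · rw [Finset.mul_sum]
            · unfold gradV
              rw [Finset.mul_sum]
          · rw [hT]
            exact Finset.sum_congr rfl fun σ _ => Finset.mul_sum _ _ _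
  rw [split, hX1, hX2]
  ring
end Geo6

/-- from `£_ξ G = τ·G`, `£_ξ V = (τ−2h)·V` and the symmetry condition
`£_ξ Γ^κ_{μν} − (1/2)(h_{,μ}δ^κ_ν + h_{,ν}δ^κ_μ) − P^κ G_{μν} = 0` with
`P^κ = (£_ξ W)^κ/(2V) + h W^κ/V`, it follows that `h = τ + c` for a constant `c`. -/
theorem h_equals_tau_plus_constant (n : ℕ) (hn : 2 ≤ n)
    (G K : (Fin n → ℝ) → Fin n → Fin n → ℝ)
    (hGsmooth : ∀ μ ν, ContDiff ℝ (⊤ : ℕ∞) fun q => G q μ ν)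
    (hKsmooth : ∀ μ ν, ContDiff ℝ (⊤ : ℕ∞) fun q => K q μ ν)
    (hGsymm : ∀ q μ ν, G q μ ν = G q ν μ)
    (hKsymm : ∀ q μ ν, K q μ ν = K q ν μ)
    (hinv : ∀ q μ ν, (∑ ρ : Fin n, K q μ ρ * G q ρ ν) = if μ = ν then (1 : ℝ) else 0)
    (V τ h : (Fin n → ℝ) → ℝ) (ξ : (Fin n → ℝ) → Fin n → ℝ)
    (hVsmooth : ContDiff ℝ (⊤ : ℕ∞) V)
    (hVne : ∀ q, V q ≠ 0)
    (hτsmooth : ContDiff ℝ (⊤ : ℕ∞) τ)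
    (hhsmooth : ContDiff ℝ (⊤ : ℕ∞) h)
    (hξsmooth : ContDiff ℝ (⊤ : ℕ∞) ξ)
    (hlieG : ∀ q μ ν, lieG ξ G q μ ν = τ q * G q μ ν)
    (hlieV : ∀ q, lieV ξ V q = (τ q - 2 * h q) * V q)
    (hsym : ∀ q : Fin n → ℝ, ∀ μ ν κ : Fin n,
      lieGamma ξ (christoffel G K) q κ μ ν
        - (1 / 2) * (pd h μ q * (if κ = ν then (1 : ℝ) else 0)
            + pd h ν q * (if κ = μ then (1 : ℝ) else 0))
        - (lieW ξ (gradV K V) q κ / (2 * V q) + h q * gradV K V q κ / V q) * G q μ ν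
        = 0) :
    ∃ c : ℝ, ∀ q : Fin n → ℝ, h q = τ q + c := by
  have hξc : ∀ β, ContDiff ℝ (⊤ : ℕ∞) (fun q => ξ q β) := fun β => contDiff_pi.1 hξsmooth β
  -- Step 1: the gradients of h and τ agree everywhere.
  have hgrad : ∀ (q : Fin n → ℝ) (μ : Fin n), pd h μ q = pd τ μ q := by
    intro q μ
    have hsum : ∑ ν : Fin n, (lieGamma ξ (christoffel G K) q ν μ ν
        - (1 / 2) * (pd h μ q * (if ν = ν then (1 : ℝ) else 0)
            + pd h ν q * (if ν = μ then (1 : ℝ) else 0))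
        - (lieW ξ (gradV K V) q ν / (2 * V q) + h q * gradV K V q ν / V q) * G q μ ν)
        = 0 := Finset.sum_eq_zero fun ν _ => hsym q μ ν ν
    rw [Finset.sum_sub_distrib, Finset.sum_sub_distrib] at hsum
    have h1 : ∑ ν : Fin n, lieGamma ξ (christoffel G K) q ν μ ν = (n : ℝ) / 2 * pd τ μ q :=
      lieGamma_contract hGsmooth hKsmooth hGsymm hKsymm hinv hlieG hξsmooth hτsmooth q μ
    have h2 : ∑ ν : Fin n, (1 / 2) * (pd h μ q * (if ν = ν then (1 : ℝ) else 0)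
        + pd h ν q * (if ν = μ then (1 : ℝ) else 0))
        = (1 / 2) * ((n : ℝ) * pd h μ q + pd h μ q) := by
      rw [← Finset.mul_sum]
      congr 1
      rw [Finset.sum_add_distrib]
      congr 1
      · simp [Finset.sum_const, Finset.card_univ, nsmul_eq_mul]
      · simp
    have hP : ∀ ν : Fin n, lieW ξ (gradV K V) q ν / (2 * V q) + h q * gradV K V q ν / V q
        = (1 / 2) * ∑ σ : Fin n, K q ν σ * (pd τ σ q - 2 * pd h σ q) := by
      intro ν
      rw [lieW_formula hGsmooth hKsmooth hGsymm hKsymm hinv hVsmooth hτsmooth hhsmooth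
        hξsmooth hlieG hlieV q ν]
      have hV := hVne q
      field_simp
      ring
    have h3 : ∑ ν : Fin n, (lieW ξ (gradV K V) q ν / (2 * V q)
        + h q * gradV K V q ν / V q) * G q μ ν
        = 1 / 2 * (pd τ μ q - 2 * pd h μ q) := by
      calc ∑ ν : Fin n, (lieW ξ (gradV K V) q ν / (2 * V q)
            + h q * gradV K V q ν / V q) * G q μ ν
          = ∑ ν : Fin n, ((1 / 2) * ∑ σ : Fin n, K q ν σ
              * (pd τ σ q - 2 * pd h σ q)) * G q μ ν :=
            Finset.sum_congr rfl fun ν _ => by rw [hP ν]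
        _ = ∑ ν : Fin n, ∑ σ : Fin n, 1 / 2 * (pd τ σ q - 2 * pd h σ q)
              * (G q μ ν * K q ν σ) := by
            refine Finset.sum_congr rfl fun ν _ => ?_
            rw [mul_comm, Finset.mul_sum, Finset.mul_sum]
            exact Finset.sum_congr rfl fun σ _ => by ring
        _ = ∑ σ : Fin n, ∑ ν : Fin n, 1 / 2 * (pd τ σ q - 2 * pd h σ q)
              * (G q μ ν * K q ν σ) := Finset.sum_comm
        _ = ∑ σ : Fin n, 1 / 2 * (pd τ σ q - 2 * pd h σ q)
              * (∑ ν : Fin n, G q μ ν * K q ν σ) :=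
            Finset.sum_congr rfl fun σ _ => (Finset.mul_sum _ _ _).symm
        _ = ∑ σ : Fin n, 1 / 2 * (pd τ σ q - 2 * pd h σ q)
              * (if μ = σ then (1 : ℝ) else 0) :=
            Finset.sum_congr rfl fun σ _ => by rw [hGK hGsymm hKsymm hinv q μ σ]
        _ = 1 / 2 * (pd τ μ q - 2 * pd h μ q) := by simp
    rw [h1, h2, h3] at hsum
    have hn' : (2 : ℝ) ≤ (n : ℝ) := by exact_mod_cast hn
    have key : ((n : ℝ) - 1) * (pd τ μ q - pd h μ q) = 0 := by ring_nf; ring_nf at hsum; linarith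
    rcases mul_eq_zero.1 key with hcase | hcase
    · exfalso; linarith
    · linarith
  -- Step 2: h - τ has vanishing derivative, hence is constant.
  have hdiff : Differentiable ℝ (fun p => h p - τ p) :=
    (Aux.cdiff hhsmooth).sub (Aux.cdiff hτsmooth)
  have hzero : ∀ q : Fin n → ℝ, fderiv ℝ (fun p => h p - τ p) q = 0 := by
    intro q
    have hbasis : ∀ i : Fin n, fderiv ℝ (fun p => h p - τ p) q (Pi.single i 1) = 0 := by
      intro i
      have := Aux.pd_sub (Aux.cdiff hhsmooth q) (Aux.cdiff hτsmooth q) i (q := q)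
      have e : pd (fun p => h p - τ p) i q = pd h i q - pd τ i q := this
      have : pd (fun p => h p - τ p) i q = 0 := by rw [e, hgrad q i]; ring
      exact this
    ext v
    have hv : v = ∑ i : Fin n, v i • (Pi.single i (1 : ℝ) : Fin n → ℝ) := by
      have e1 : ∀ i, v i • (Pi.single i (1 : ℝ) : Fin n → ℝ) = Pi.single i (v i) := by
        intro i
        rw [← Pi.single_smul]
        simp
      rw [Finset.sum_congr rfl fun i _ => e1 i, Finset.univ_sum_single]
    calc fderiv ℝ (fun p => h p - τ p) q v
        = fderiv ℝ (fun p => h p - τ p) q (∑ i : Fin n, v i • (Pi.single i (1 : ℝ) : Fin n → ℝ)) := by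
          rw [← hv]
      _ = ∑ i : Fin n, v i • fderiv ℝ (fun p => h p - τ p) q (Pi.single i (1 : ℝ)) := by
          rw [map_sum]
          exact Finset.sum_congr rfl fun i _ => by rw [map_smul]
      _ = 0 := by
          rw [Finset.sum_eq_zero fun i _ => by rw [hbasis i, smul_zero]]
  refine ⟨h 0 - τ 0, fun q => ?_⟩
  have hconst := is_const_of_fderiv_eq_zero hdiff hzero q 0
  have : h q - τ q = h 0 - τ 0 := hconst
  linarith
end

section
/- Let n ≥ 1, and let G : ℝⁿ \ {0} → (n×n real symmetric matrices) and V : ℝⁿ \ {0} → ℝ be smooth and positively homogeneous: G(λq) = λ^{n/2−2} G(q) and V(λq) = λ^{n/2−1} V(q) for all λ > 0 and q ≠ 0. Suppose q : I → ℝⁿ \ {0} and N : I → (0,∞) are smooth and satisfy the Euler–Lagrange equations d/dt[(1/N) Σ_α G_{κα}(q) q̇^α] = (1/(2N)) Σ_{μ,ν} (∂G_{μν}/∂q^κ)(q) q̇^μ q̇^ν − N (∂V/∂q^κ)(q) for all κ, together with the constraint Σ_{μ,ν} G_{μν}(q) q̇^μ q̇^ν + 2N² V(q) = 0. Then for every λ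 > 0 the scaled pair q̃(t) = λ·q(t), Ñ(t) = λ^{1/2}·N(t) also satisfies the same Euler–Lagrange equations and the constraint. (This is the scaling symmetry generated by Y = q^α ∂_{q^α} + (1/2) N ∂_N of the vacuum Einstein equations in minisuperspace.) -/
open scoped BigOperators

lemma pd_homog {n : ℕ} (f : (Fin n → ℝ) → ℝ)
    (hf : ContDiffOn ℝ (⊤ : ℕ∞) f {q : Fin n → ℝ | q ≠ 0})
    (l c : ℝ) (hl : 0 < l)
    (hom : ∀ p : Fin n → ℝ, p ≠ 0 → f (l • p) = c * f p)
    (q : Fin n → ℝ) (hq : q ≠ 0) (κ : Fin n) :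
    pd f κ (l • q) = (c / l) * pd f κ q := by
  have hopen : IsOpen {p : Fin n → ℝ | p ≠ 0} := isOpen_ne
  have hdiff : ∀ p : Fin n → ℝ, p ≠ 0 → DifferentiableAt ℝ f p := by
    intro p hp
    exact (hf.differentiableOn (by simp)).differentiableAt (hopen.mem_nhds hp)
  have hlq : l • q ≠ 0 := smul_ne_zero (ne_of_gt hl) hq
  have hflq := (hdiff _ hlq).hasFDerivAt
  have hL : HasFDerivAt (fun p : Fin n → ℝ => l • p)
      (l • ContinuousLinearMap.id ℝ (Fin n → ℝ)) q := (hasFDerivAt_id q).const_smul l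
  have hcomp : HasFDerivAt (fun p => f (l • p))
      ((fderiv ℝ f (l • q)).comp (l • ContinuousLinearMap.id ℝ (Fin n → ℝ))) q :=
    hflq.comp q hL
  have heq : (fun p => c * f p) =ᶠ[nhds q] (fun p => f (l • p)) := by
    filter_upwards [hopen.mem_nhds hq] with p hp
    exact (hom p hp).symm
  have h2 := hcomp.congr_of_eventuallyEq heq
  have h3 : HasFDerivAt (fun p => c * f p) (c • fderiv ℝ f q) q :=
    (hdiff q hq).hasFDerivAt.const_smul c
  have huniq := h2.unique h3
  have := congrArg (fun (T : (Fin n → ℝ) →L[ℝ] ℝ) => T (Pi.single κ 1)) huniq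
  simp only [ContinuousLinearMap.comp_apply, ContinuousLinearMap.smul_apply,
    ContinuousLinearMap.id_apply, map_smul, smul_eq_mul] at this
  unfold pd
  field_simp
  linarith [this]

/-- the scaling symmetry `Y = q^α ∂_{q^α} + (1/2) N ∂_N` of vacuum
minisuperspace Einstein equations: for homogeneous `G` (degree `n/2−2`) and `V`
(degree `n/2−1`), if `(q,N)` solves the Euler–Lagrange equations and the constraint
then so does `(λ·q, λ^{1/2}·N)` for every `λ > 0`. -/
theorem scaling_symmetry_of_vacuum_equations (n : ℕ) (hn : 1 ≤ n)
    (G : (Fin n → ℝ) → Fin n → Fin n → ℝ) (V : (Fin n → ℝ) → ℝ)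
    (hGsmooth : ∀ μ ν, ContDiffOn ℝ (⊤ : ℕ∞) (fun q => G q μ ν) {q : Fin n → ℝ | q ≠ 0})
    (hGsymm : ∀ q : Fin n → ℝ, q ≠ 0 → ∀ μ ν, G q μ ν = G q ν μ)
    (hGhom : ∀ l : ℝ, 0 < l → ∀ q : Fin n → ℝ, q ≠ 0 → ∀ μ ν,
      G (l • q) μ ν = l ^ ((n : ℝ) / 2 - 2) * G q μ ν)
    (hVsmooth : ContDiffOn ℝ (⊤ : ℕ∞) V {q : Fin n → ℝ | q ≠ 0})
    (hVhom : ∀ l : ℝ, 0 < l → ∀ q : Fin n → ℝ, q ≠ 0 →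
      V (l • q) = l ^ ((n : ℝ) / 2 - 1) * V q)
    (I : Set ℝ) (hIopen : IsOpen I)
    (q : ℝ → Fin n → ℝ) (qd : ℝ → Fin n → ℝ) (N : ℝ → ℝ)
    (hq : ∀ t ∈ I, HasDerivAt q (qd t) t)
    (hqne : ∀ t ∈ I, q t ≠ 0)
    (hNpos : ∀ t ∈ I, 0 < N t)
    -- the Euler–Lagrange equations on I
    (hEL : ∀ t ∈ I, ∀ κ : Fin n,
      HasDerivAt (fun s => (1 / N s) * ∑ α : Fin n, G (q s) κ α * qd s α)
        ((1 / (2 * N t)) * (∑ μ : Fin n, ∑ ν : Fin n,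
            pd (fun p => G p μ ν) κ (q t) * qd t μ * qd t ν)
          - N t * pd V κ (q t)) t)
    -- the constraint on I
    (hcon : ∀ t ∈ I, (∑ μ : Fin n, ∑ ν : Fin n, G (q t) μ ν * qd t μ * qd t ν)
        + 2 * (N t) ^ 2 * V (q t) = 0) :
    ∀ l : ℝ, 0 < l →
      -- the Euler–Lagrange equations for q̃ = λ·q, Ñ = λ^{1/2}·N
      (∀ t ∈ I, ∀ κ : Fin n,
        HasDerivAt (fun s => (1 / (l ^ ((1 : ℝ) / 2) * N s)) *
            ∑ α : Fin n, G (l • q s) κ α * (l * qd s α))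
          ((1 / (2 * (l ^ ((1 : ℝ) / 2) * N t))) * (∑ μ : Fin n, ∑ ν : Fin n,
              pd (fun p => G p μ ν) κ (l • q t) * (l * qd t μ) * (l * qd t ν))
            - (l ^ ((1 : ℝ) / 2) * N t) * pd V κ (l • q t)) t)
      -- and the constraint
      ∧ (∀ t ∈ I, (∑ μ : Fin n, ∑ ν : Fin n,
            G (l • q t) μ ν * (l * qd t μ) * (l * qd t ν))
          + 2 * (l ^ ((1 : ℝ) / 2) * N t) ^ 2 * V (l • q t) = 0) := by
  intro l hl
  have hlne : l ≠ 0 := ne_of_gt hl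
  set L : ℝ := l ^ ((1 : ℝ) / 2) with hLdef
  set A : ℝ := l ^ ((n : ℝ) / 2 - 2) with hAdef
  set B : ℝ := l ^ ((n : ℝ) / 2 - 1) with hBdef
  have hLpos : 0 < L := Real.rpow_pos_of_pos hl _
  have hLne : L ≠ 0 := ne_of_gt hLpos
  have hLL : L * L = l := by
    rw [hLdef, ← Real.rpow_add hl]; norm_num
  have hBA : B = A * l := by
    rw [hBdef, hAdef, show (n:ℝ)/2 - 1 = ((n:ℝ)/2 - 2) + 1 by ring,
      Real.rpow_add hl, Real.rpow_one]
  -- pd scaling identities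
  have hpdG : ∀ t ∈ I, ∀ κ μ ν : Fin n,
      pd (fun p => G p μ ν) κ (l • q t) = (A / l) * pd (fun p => G p μ ν) κ (q t) := by
    intro t ht κ μ ν
    exact pd_homog _ (hGsmooth μ ν) l A hl
      (fun p hp => hGhom l hl p hp μ ν) (q t) (hqne t ht) κ
  have hpdV : ∀ t ∈ I, ∀ κ : Fin n,
      pd V κ (l • q t) = (B / l) * pd V κ (q t) := by
    intro t ht κ
    exact pd_homog _ hVsmooth l B hl (fun p hp => hVhom l hl p hp) (q t) (hqne t ht) κ
  constructor
  · intro t ht κ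
    set K : ℝ := A * L with hK
    have hEv : (fun s => (1 / (L * N s)) * ∑ α : Fin n, G (l • q s) κ α * (l * qd s α))
        =ᶠ[nhds t] (fun s => K * ((1 / N s) * ∑ α : Fin n, G (q s) κ α * qd s α)) := by
      filter_upwards [hIopen.mem_nhds ht] with s hs
      have hNs : N s ≠ 0 := ne_of_gt (hNpos s hs)
      have : ∑ α : Fin n, G (l • q s) κ α * (l * qd s α)
          = (A * l) * ∑ α : Fin n, G (q s) κ α * qd s α := by
        rw [Finset.mul_sum]
        refine Finset.sum_congr rfl (fun α _ => ?_)
        rw [hGhom l hl (q s) (hqne s hs) κ α]; ring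
      rw [this, hK]
      field_simp
      rw [← hLL]; ring
    have hd := ((hEL t ht κ).const_mul K).congr_of_eventuallyEq hEv
    convert hd using 1
    case e'_4 => rfl
    case e'_5 => rfl
    have hNt : N t ≠ 0 := ne_of_gt (hNpos t ht)
    have hS2 : ∑ μ : Fin n, ∑ ν : Fin n,
        pd (fun p => G p μ ν) κ (l • q t) * (l * qd t μ) * (l * qd t ν)
        = (A * l) * ∑ μ : Fin n, ∑ ν : Fin n,
            pd (fun p => G p μ ν) κ (q t) * qd t μ * qd t ν := by
      rw [Finset.mul_sum]
      refine Finset.sum_congr rfl (fun μ _ => ?_)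
      rw [Finset.mul_sum]
      refine Finset.sum_congr rfl (fun ν _ => ?_)
      rw [hpdG t ht κ μ ν]
      field_simp
    rw [hS2, hpdV t ht κ, hK, hBA]
    field_simp
    rw [← hLL]; ring
  · intro t ht
    have hS : ∑ μ : Fin n, ∑ ν : Fin n, G (l • q t) μ ν * (l * qd t μ) * (l * qd t ν)
        = (A * l * l) * ∑ μ : Fin n, ∑ ν : Fin n, G (q t) μ ν * qd t μ * qd t ν := by
      rw [Finset.mul_sum]
      refine Finset.sum_congr rfl (fun μ _ => ?_)
      rw [Finset.mul_sum]
      refine Finset.sum_congr rfl (fun ν _ => ?_)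
      rw [hGhom l hl (q t) (hqne t ht) μ ν]; ring
    rw [hS, hVhom l hl (q t) (hqne t ht)]
    have hc := hcon t ht
    have : (L * N t) ^ 2 = l * (N t) ^ 2 := by rw [mul_pow, ← hLL]; ring
    rw [this, ← hBdef, hBA]
    linear_combination (A * l * l) * hc
end

section
/- Let f₁, f₂ : (0,∞) → ℝ be continuously differentiable and let c ∈ ℝ be a constant such that 2 f₁(u) + 2u·f₁'(u) + f₂'(b) = c for all u > 0 and all b > 0. Then there exist constants k₁, k₂, k₃ ∈ ℝ such that f₂(b) = k₁ b + k₂ for all b > 0 and f₁(u) = 2k₃/u + (c − k₁)/2 for all u > 0. Consequently, within the family of conformal Killing fields ξ = (a f₁(a²b) − (a/(2b)) f₂(b), f₂(b)) of the scaled Kantowski–Sachs supermetric, those with constant conformal factor c are exactly the linear combinations of the three Killing fields ξ₁ = (−a,b), ξ₂ = (−a/(2b),1), ξ₃ = (1/(ab),0) and c times the homothetic field h = (a/2, 0). -/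
open scoped BigOperators

lemma const_of_hasDerivAt_zero (g : ℝ → ℝ)
    (h : ∀ x ∈ Set.Ioi (0:ℝ), HasDerivAt g 0 x) :
    ∀ x ∈ Set.Ioi (0:ℝ), g x = g 1 := by
  intro x hx
  refine (convex_Ioi (0:ℝ)).is_const_of_fderivWithin_eq_zero
    (fun z hz => (h z hz).differentiableAt.differentiableWithinAt) ?_ hx (by norm_num)
  intro z hz
  rw [fderivWithin_of_isOpen isOpen_Ioi hz, (h z hz).hasFDerivAt.fderiv]
  ext
  simp

/-- solving `2f₁(u) + 2u f₁'(u) + f₂'(b) = c` for all `u, b > 0`: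
`f₂` is affine, `f₁(u) = 2k₃/u + (c−k₁)/2`, and the corresponding conformal Killing field
`ξ = (a f₁(a²b) − (a/(2b)) f₂(b), f₂(b))` decomposes as the linear combination
`k₁·ξ₁ + k₂·ξ₂ + 2k₃·ξ₃ + c·h` of the three Killing fields
`ξ₁ = (−a,b)`, `ξ₂ = (−a/(2b),1)`, `ξ₃ = (1/(ab),0)` and the homothetic field `h = (a/2,0)`. -/
theorem constant_conformal_factor_forces_killing_combination
    (f₁ f₂ : ℝ → ℝ) (c : ℝ)
    (hf₁ : ContDiffOn ℝ 1 f₁ (Set.Ioi 0))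
    (hf₂ : ContDiffOn ℝ 1 f₂ (Set.Ioi 0))
    (heq : ∀ u : ℝ, 0 < u → ∀ b : ℝ, 0 < b →
      2 * f₁ u + 2 * u * deriv f₁ u + deriv f₂ b = c) :
    ∃ k₁ k₂ k₃ : ℝ,
      (∀ b : ℝ, 0 < b → f₂ b = k₁ * b + k₂)
      ∧ (∀ u : ℝ, 0 < u → f₁ u = 2 * k₃ / u + (c - k₁) / 2)
      ∧ (∀ a b : ℝ, 0 < a → 0 < b →
          (a * f₁ (a ^ 2 * b) - (a / (2 * b)) * f₂ b
              = k₁ * (-a) + k₂ * (-(a / (2 * b))) + 2 * k₃ * (1 / (a * b)) + c * (a / 2))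
          ∧ (f₂ b = k₁ * b + k₂ * 1 + 2 * k₃ * 0 + c * 0)) := by
  have hd₁ : ∀ u : ℝ, 0 < u → HasDerivAt f₁ (deriv f₁ u) u := fun u hu =>
    (((hf₁.differentiableOn one_ne_zero).differentiableAt
      (isOpen_Ioi.mem_nhds hu))).hasDerivAt
  have hd₂ : ∀ b : ℝ, 0 < b → HasDerivAt f₂ (deriv f₂ b) b := fun b hb =>
    (((hf₂.differentiableOn one_ne_zero).differentiableAt
      (isOpen_Ioi.mem_nhds hb))).hasDerivAt
  set k₁ : ℝ := c - 2 * f₁ 1 - 2 * deriv f₁ 1 with hk₁def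
  have hk₁ : ∀ b : ℝ, 0 < b → deriv f₂ b = k₁ := by
    intro b hb
    have := heq 1 one_pos b hb
    rw [hk₁def]; linarith
  -- f₂ is affine
  set k₂ : ℝ := f₂ 1 - k₁ with hk₂def
  have hf₂eq : ∀ b : ℝ, 0 < b → f₂ b = k₁ * b + k₂ := by
    have hg : ∀ x ∈ Set.Ioi (0:ℝ), HasDerivAt (fun b => f₂ b - k₁ * b) 0 x := by
      intro x hx
      have := (hd₂ x hx).sub ((hasDerivAt_id x).const_mul k₁)
      rw [hk₁ x hx] at this
      exact this.congr_deriv (by simp)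
    intro b hb
    have := const_of_hasDerivAt_zero _ hg b hb
    simp only [hk₂def]
    linarith
  -- the ODE for f₁
  have hode : ∀ u : ℝ, 0 < u → f₁ u + u * deriv f₁ u = (c - k₁) / 2 := by
    intro u hu
    have h1 := heq u hu 1 one_pos
    rw [hk₁ 1 one_pos] at h1
    linarith
  set k₃ : ℝ := (f₁ 1 - (c - k₁) / 2) / 2 with hk₃def
  have hf₁eq : ∀ u : ℝ, 0 < u → f₁ u = 2 * k₃ / u + (c - k₁) / 2 := by
    have hg : ∀ x ∈ Set.Ioi (0:ℝ),
        HasDerivAt (fun u => u * f₁ u - (c - k₁) / 2 * u) 0 x := by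
      intro x hx
      have := ((hasDerivAt_id x).mul (hd₁ x hx)).sub
        ((hasDerivAt_id x).const_mul ((c - k₁) / 2))
      have h2 := hode x hx
      have h3 : 1 * f₁ x + id x * deriv f₁ x - (c - k₁) / 2 * 1 = 0 := by
        simp only [id]; linarith
      rw [h3] at this
      exact this
    intro u hu
    have h := const_of_hasDerivAt_zero _ hg u hu
    have hu' : u ≠ 0 := ne_of_gt hu
    field_simp [hk₃def]
    nlinarith [h]
  refine ⟨k₁, k₂, k₃, hf₂eq, hf₁eq, ?_⟩
  intro a b ha hb
  have hab : (0:ℝ) < a ^ 2 * b := by positivity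
  constructor
  · rw [hf₁eq _ hab, hf₂eq b hb]
    have ha' : a ≠ 0 := ne_of_gt ha
    have hb' : b ≠ 0 := ne_of_gt hb
    field_simp
    ring
  · rw [hf₂eq b hb]; ring
end

section
/- Let c₁ < 0, c₄ ∈ ℝ, c₂ ≠ 0, and set c₃ = −8/c₂. Define on the open interval I = (c₁ + c₄, c₄) the functions a(τ) = (c₂/2)·√((c₄ − τ)/(τ − c₁ − c₄)) and b(τ) = (c₁ + c₄ − τ)/c₂ (the square root is well defined since (c₄ − τ)/(τ − c₁ − c₄) > 0 on I). Then a and b are differentiable on I and satisfy the four first-integral relations of the vacuum Kantowski–Sachs system: 8·a(τ)·b(τ)²·a'(τ) = c₁; 4·a(τ)·(2·b(τ)·a'(τ) + a(τ)·b'(τ)) = c₂; 8·b'(τ) = c₃; and 4·a(τ)²·b(τ)·b'(τ) = −τ + c₄, for all τ ∈ I. -/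
/-- the explicit Kantowski–Sachs scale factors
`a(τ) = (c₂/2)√((c₄−τ)/(τ−c₁−c₄))`, `b(τ) = (c₁+c₄−τ)/c₂` satisfy, on
`I = (c₁+c₄, c₄)`, the four first-integral relations of the vacuum Kantowski–Sachs system. -/
theorem kantowski_sachs_first_integrals
    (c₁ c₂ c₃ c₄ : ℝ) (hc₁ : c₁ < 0) (hc₂ : c₂ ≠ 0) (hc₃ : c₃ = -8 / c₂)
    (a b : ℝ → ℝ)
    (ha : ∀ τ : ℝ, a τ = (c₂ / 2) * Real.sqrt ((c₄ - τ) / (τ - c₁ - c₄)))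
    (hb : ∀ τ : ℝ, b τ = (c₁ + c₄ - τ) / c₂) :
    (∀ τ ∈ Set.Ioo (c₁ + c₄) c₄, DifferentiableAt ℝ a τ ∧ DifferentiableAt ℝ b τ)
    ∧ (∀ τ ∈ Set.Ioo (c₁ + c₄) c₄,
        8 * a τ * (b τ) ^ 2 * deriv a τ = c₁
        ∧ 4 * a τ * (2 * b τ * deriv a τ + a τ * deriv b τ) = c₂
        ∧ 8 * deriv b τ = c₃
        ∧ 4 * (a τ) ^ 2 * b τ * deriv b τ = -τ + c₄) := by
  have hbfun : b = fun τ => (c₁ + c₄ - τ) / c₂ := funext hb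
  have hafun : a = fun τ => (c₂ / 2) * Real.sqrt ((c₄ - τ) / (τ - c₁ - c₄)) := funext ha
  have hbder : ∀ τ : ℝ, HasDerivAt b (-1 / c₂) τ := by
    intro τ
    rw [hbfun]
    have h : HasDerivAt (fun τ : ℝ => (c₁ + c₄ - τ) / c₂) ((0 - 1) / c₂) τ := by
      exact (((hasDerivAt_const τ (c₁ + c₄)).sub (hasDerivAt_id τ)).div_const c₂)
    simpa using h
  have hader : ∀ τ ∈ Set.Ioo (c₁ + c₄) c₄,
      HasDerivAt a (c₂ / 2 * (c₁ / (τ - c₁ - c₄) ^ 2 /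
        (2 * Real.sqrt ((c₄ - τ) / (τ - c₁ - c₄))))) τ := by
    intro τ hτ
    obtain ⟨h1, h2⟩ := hτ
    have hv : 0 < τ - c₁ - c₄ := by linarith
    have hu : 0 < c₄ - τ := by linarith
    have hf : HasDerivAt (fun τ : ℝ => (c₄ - τ) / (τ - c₁ - c₄))
        (c₁ / (τ - c₁ - c₄) ^ 2) τ := by
      have hnum : HasDerivAt (fun τ : ℝ => c₄ - τ) (-1) τ := by
        simpa using (hasDerivAt_id' τ).const_sub c₄
      have hden : HasDerivAt (fun τ : ℝ => τ - c₁ - c₄) 1 τ := by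
        simpa using ((hasDerivAt_id' τ).sub_const c₁).sub_const
          c₄
      have := hnum.div hden hv.ne'
      convert this using 1
      exacts [rfl, rfl, rfl, by ring]
    have hfne : (c₄ - τ) / (τ - c₁ - c₄) ≠ 0 := by positivity
    have hs := hf.sqrt hfne
    have := hs.const_mul (c₂ / 2)
    rw [hafun]
    exact this
  constructor
  · intro τ hτ
    exact ⟨(hader τ hτ).differentiableAt, (hbder τ).differentiableAt⟩
  · intro τ hτ
    obtain ⟨h1, h2⟩ := hτ
    have hv : 0 < τ - c₁ - c₄ := by linarith
    have hu : 0 < c₄ - τ := by linarith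
    have hda := (hader τ ⟨h1, h2⟩).deriv
    have hdb := (hbder τ).deriv
    set s := Real.sqrt ((c₄ - τ) / (τ - c₁ - c₄)) with hsdef
    have hspos : 0 < s := Real.sqrt_pos.mpr (by positivity)
    have hs2 : s ^ 2 = (c₄ - τ) / (τ - c₁ - c₄) := Real.sq_sqrt (by positivity)
    have hs2' : s ^ 2 * (τ - c₁ - c₄) = c₄ - τ := by
      rw [hs2]; field_simp
    have haτ : a τ = c₂ / 2 * s := ha τ
    have hbτ := hb τ
    clear hsdef hs2 hafun ha hbfun hb hader hbder
    clear_value s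
    refine ⟨?_, ?_, ?_, ?_⟩
    · rw [hda, haτ, hbτ]
      field_simp
      nlinarith [hs2', hspos, sq_nonneg s, hv]
    · rw [hda, hdb, haτ, hbτ]
      field_simp
      linear_combination (-4 * (τ - c₁ - c₄)) * hs2'
    · rw [hdb, hc₃]; ring
    · rw [hdb, haτ, hbτ]
      field_simp
      linear_combination 4 * hs2'
end
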